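/- arXiv:1708.03159 — 5 statements merged into one kernel-verified Lean document; each statement's English description precedes it below -/
import Mathlib

section
/- Let η : ℝ → ℂ be measurable with Re η(p) ≤ 0 for all p and |η(p)| ≤ C(1+p²) for some constant C > 0, and let ν be a Borel measure on (0,∞) with ∫_0^∞ min(s,1) ν(ds) < ∞; set f(λ) = ∫_0^∞ (1 − e^{−λs}) ν(ds) for Re λ ≥ 0. For z ≥ 0 and h ∈ 𝒮(ℝ) define T_z h(x) = (2π)^{-1/2} ∫_ℝ e^{ipx} e^{z η(p)} ĥ(p) dp. Then for every h ∈ 𝒮(ℝ) and x ∈ ℝ the integral ∫_0^∞ ( T_z h(x) − h(x) ) ν(dz) converges absolutely and equals (2π)^{-1/2} ∫_ℝ e^{ipx} ( −f(−η(p)) ) ĥ(p) dp. -/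
open MeasureTheory Complex Real Filter

/-- Fourier transform with the `(2π)^{-1/2}` normalization. -/
noncomputable def fhat (f : ℝ → ℂ) (p : ℝ) : ℂ :=
  (Real.sqrt (2 * Real.pi))⁻¹ * ∫ x : ℝ, Complex.exp (-(Complex.I * p * x)) * f x

open FourierTransform


lemma my_sigmaFinite (ν : Measure ℝ) (hν0 : ν (Set.Iic (0:ℝ)) = 0)
    (hνfin : ∫⁻ s : ℝ, ENNReal.ofReal (min s 1) ∂ν < ⊤) : SigmaFinite ν := by
  have key : ∀ ε : ℝ, 0 < ε → ν (Set.Ioi ε) < ⊤ := by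
    intro ε hε
    have h1 : ENNReal.ofReal (min ε 1) * ν (Set.Ioi ε)
        ≤ ∫⁻ s : ℝ, ENNReal.ofReal (min s 1) ∂ν := by
      rw [← setLIntegral_const]
      refine le_trans (setLIntegral_mono (by fun_prop) ?_) (setLIntegral_le_lintegral _ _)
      intro s hs
      exact ENNReal.ofReal_le_ofReal (min_le_min (le_of_lt hs) le_rfl)
    have h2 : (0:ℝ) < min ε 1 := lt_min hε one_pos
    by_contra hc
    push_neg at hc
    rw [top_le_iff] at hc
    rw [hc, ENNReal.mul_top (by simp [ENNReal.ofReal_eq_zero, not_le]; exact hε)] at h1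
    exact absurd (top_le_iff.mp h1) hνfin.ne
  refine ⟨⟨⟨fun n => Set.Iic 0 ∪ Set.Ioi (1/(n+1) : ℝ), fun _ => trivial, fun n => ?_, ?_⟩⟩⟩
  · refine lt_of_le_of_lt (measure_union_le _ _) ?_
    rw [hν0, zero_add]
    exact key _ (by positivity)
  · ext y
    simp only [Set.mem_iUnion, Set.mem_union, Set.mem_Iic, Set.mem_Ioi, Set.mem_univ, iff_true]
    rcases le_or_gt y 0 with hy | hy
    · exact ⟨0, Or.inl hy⟩
    · obtain ⟨n, hn⟩ := exists_nat_one_div_lt hy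
      exact ⟨n, Or.inr hn⟩

lemma my_exp_bound {w : ℂ} (hw : w.re ≤ 0) :
    ‖Complex.exp w - 1‖ ≤ min ‖w‖ 2 := by
  refine le_min ?_ ?_
  · have hd : ∀ t : ℝ, HasDerivAt (fun u : ℝ => Complex.exp (u * w)) (Complex.exp (t * w) * w) t := by
      intro t
      have h1 : HasDerivAt (fun u : ℝ => (u : ℂ) * w) w t := by
        simpa using (Complex.ofRealCLM.hasDerivAt (x := t)).mul_const w
      simpa using h1.cexp
    have hint : ∫ t in (0:ℝ)..1, Complex.exp (t * w) * w =
        Complex.exp ((1:ℝ) * w) - Complex.exp ((0:ℝ) * w) := by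
      refine intervalIntegral.integral_eq_sub_of_hasDerivAt (fun t _ => hd t) ?_
      exact (Continuous.intervalIntegrable (by continuity) 0 1)
    have heq : Complex.exp w - 1 = ∫ t in (0:ℝ)..1, Complex.exp (t * w) * w := by
      rw [hint]; simp
    rw [heq]
    have := intervalIntegral.norm_integral_le_of_norm_le_const
      (C := ‖w‖) (f := fun t : ℝ => Complex.exp (t * w) * w)
      (a := 0) (b := 1) ?_
    · simpa using this
    · intro t ht
      rw [Set.uIoc_of_le (by norm_num)] at ht
      have ht0 : 0 ≤ t := le_of_lt ht.1
      rw [norm_mul, Complex.norm_exp]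
      have : ((t : ℂ) * w).re = t * w.re := by simp
      rw [this]
      nlinarith [Real.exp_le_one_iff.mpr (mul_nonpos_of_nonneg_of_nonpos ht0 hw),
        Real.exp_pos (t * w.re), norm_nonneg w]
  · calc ‖Complex.exp w - 1‖ ≤ ‖Complex.exp w‖ + 1 := by
          simpa using norm_sub_le (Complex.exp w) 1
    _ ≤ 2 := by
          rw [Complex.norm_exp]
          nlinarith [Real.exp_le_one_iff.mpr hw]

lemma my_fhat_eq (h : SchwartzMap ℝ ℂ) (p : ℝ) :
    fhat ⇑h p = ((Real.sqrt (2*π))⁻¹ : ℝ) * 𝓕 ⇑h (p/(2*π)) := by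
  rw [fhat, Real.fourier_real_eq_integral_exp_smul]
  congr 1
  refine integral_congr_ae (Eventually.of_forall fun v => ?_)
  show Complex.exp (-(Complex.I * p * v)) * h v
      = Complex.exp (↑(-2 * π * v * (p / (2 * π))) * Complex.I) • h v
  rw [smul_eq_mul]
  congr 2
  have hπ : (π : ℂ) ≠ 0 := by simpa using Real.pi_ne_zero
  push_cast
  field_simp

lemma my_fhat_cont (h : SchwartzMap ℝ ℂ) : Continuous (fhat ⇑h) := by
  have he : fhat ⇑h = fun p => (((Real.sqrt (2*π))⁻¹ : ℝ) : ℂ) *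
      (SchwartzMap.fourierTransformCLM ℂ h) (p/(2*π)) := by
    funext p; rw [my_fhat_eq, SchwartzMap.fourierTransformCLM_apply, SchwartzMap.fourier_coe]
  rw [he]
  exact continuous_const.mul ((SchwartzMap.fourierTransformCLM ℂ h).continuous.comp
    (continuous_id.div_const _))

lemma my_fhat_integrable (h : SchwartzMap ℝ ℂ) : Integrable (fhat ⇑h) := by
  have hφ : Integrable (⇑(SchwartzMap.fourierTransformCLM ℂ h)) volume :=
    (SchwartzMap.fourierTransformCLM ℂ h).integrable
  have h2 : Integrable (fun p : ℝ => (SchwartzMap.fourierTransformCLM ℂ h) (p / (2*π))) :=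
    hφ.comp_div (by positivity)
  have h3 := h2.const_mul (((Real.sqrt (2*π))⁻¹ : ℝ) : ℂ)
  refine h3.congr (Eventually.of_forall fun p => ?_)
  rw [my_fhat_eq, SchwartzMap.fourierTransformCLM_apply, SchwartzMap.fourier_coe]

lemma my_fhat_abs (h : SchwartzMap ℝ ℂ) (p : ℝ) :
    ‖fhat ⇑h p‖
      = (Real.sqrt (2*π))⁻¹ * ‖(SchwartzMap.fourierTransformCLM ℂ h) (p/(2*π))‖ := by
  rw [my_fhat_eq, SchwartzMap.fourierTransformCLM_apply, SchwartzMap.fourier_coe, norm_mul]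
  rw [Complex.norm_real, Real.norm_eq_abs, _root_.abs_of_nonneg (by positivity : (0:ℝ) ≤ (Real.sqrt (2*π))⁻¹)]

lemma my_fhat_decay (h : SchwartzMap ℝ ℂ) :
    Integrable (fun p : ℝ => (1 + p^2) * ‖fhat ⇑h p‖) := by
  set φ := SchwartzMap.fourierTransformCLM ℂ h with hφdef
  have h0 : Integrable (fun ξ : ℝ => ‖φ ξ‖) := φ.integrable.norm
  have h2 : Integrable (fun ξ : ℝ => ‖ξ‖^2 * ‖φ ξ‖) := φ.integrable_pow_mul volume 2
  have hsum : Integrable (fun ξ : ℝ => (1 + ξ^2) * ‖φ ξ‖) := by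
    refine (h0.add h2).congr (Eventually.of_forall fun ξ => ?_)
    simp only [Real.norm_eq_abs, Pi.add_apply]
    rw [_root_.sq_abs]
    ring
  have hcomp : Integrable (fun p : ℝ => (1 + (p/(2*π))^2) * ‖φ (p/(2*π))‖) :=
    hsum.comp_div (by positivity)
  have hconst := hcomp.const_mul ((2*π)^2 * (Real.sqrt (2*π))⁻¹)
  refine hconst.mono' ?_ (Eventually.of_forall fun p => ?_)
  · have hc : Continuous (fun p : ℝ => (1 + p^2) * ‖fhat ⇑h p‖) := by
      have : Continuous (fun p : ℝ => ‖fhat ⇑h p‖) := (my_fhat_cont h).norm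
      exact (continuous_const.add (continuous_pow 2)).mul this
    exact hc.aestronglyMeasurable
  · rw [Real.norm_eq_abs, _root_.abs_of_nonneg (by positivity), my_fhat_abs, ← hφdef]
    have hc : (0:ℝ) ≤ (Real.sqrt (2*π))⁻¹ := by positivity
    have hN : (0:ℝ) ≤ ‖φ (p/(2*π))‖ := norm_nonneg _
    have h4 : (1:ℝ) + p^2 ≤ (2*π)^2 + p^2 := by nlinarith [Real.pi_gt_three]
    have h5 : (2*π)^2 * (1 + (p/(2*π))^2) = (2*π)^2 + p^2 := by
      field_simp
    calc (1 + p^2) * ((Real.sqrt (2*π))⁻¹ * ‖φ (p/(2*π))‖)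
        ≤ ((2*π)^2 + p^2) * ((Real.sqrt (2*π))⁻¹ * ‖φ (p/(2*π))‖) :=
          mul_le_mul_of_nonneg_right h4 (mul_nonneg hc hN)
      _ = (2*π)^2 * (Real.sqrt (2*π))⁻¹ * ((1 + (p/(2*π))^2) * ‖φ (p/(2*π))‖) := by
          rw [← h5]; ring

lemma my_inv_real (f : ℝ → ℂ) (w : ℝ) :
    𝓕⁻ f w = ∫ v : ℝ, Complex.exp (↑(2*π*(v*w)) * Complex.I) • f v := by
  rw [Real.fourierInv_eq']
  simp [RCLike.inner_apply]
  simp_rw [mul_comm (w:ℂ)]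

lemma my_inversion (h : SchwartzMap ℝ ℂ) (y : ℝ) :
    (((Real.sqrt (2*π))⁻¹ : ℝ) : ℂ) * ∫ p : ℝ, Complex.exp (Complex.I*p*y) * fhat ⇑h p
      = h y := by
  have hφint : Integrable (𝓕 ⇑h) := by
    have := (SchwartzMap.fourierTransformCLM ℂ h).integrable (μ := volume)
    rwa [SchwartzMap.fourierTransformCLM_apply, SchwartzMap.fourier_coe] at this
  have hinv : 𝓕⁻ (𝓕 ⇑h) y = h y := by
    rw [h.continuous.fourierInv_fourier_eq h.integrable hφint]
  set G : ℝ → ℂ := fun ξ => Complex.exp (↑(2*π*(ξ*y)) * Complex.I) • (𝓕 ⇑h) ξ with hG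
  have hGint : ∫ ξ : ℝ, G ξ = 𝓕⁻ (𝓕 ⇑h) y := (my_inv_real _ _).symm
  have key : ∀ p : ℝ, Complex.exp (Complex.I*p*y) * fhat ⇑h p
      = (((Real.sqrt (2*π))⁻¹ : ℝ) : ℂ) * G (p/(2*π)) := by
    intro p
    rw [my_fhat_eq, hG]
    show Complex.exp (Complex.I*p*y) * (((Real.sqrt (2*π))⁻¹ : ℝ) * 𝓕 ⇑h (p/(2*π)))
      = ((Real.sqrt (2*π))⁻¹ : ℝ) * (Complex.exp (↑(2*π*((p/(2*π))*y)) * Complex.I) • 𝓕 ⇑h (p/(2*π)))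
    rw [smul_eq_mul]
    have harg : (Complex.I*p*y) = (↑(2*π*((p/(2*π))*y)) * Complex.I) := by
      have hπ : (π : ℂ) ≠ 0 := by simpa using Real.pi_ne_zero
      push_cast
      field_simp
    rw [harg]; ring
  have step1 : ∫ p : ℝ, Complex.exp (Complex.I*p*y) * fhat ⇑h p
      = (((Real.sqrt (2*π))⁻¹ : ℝ) : ℂ) * ∫ p : ℝ, G (p/(2*π)) := by
    simp_rw [key]
    exact integral_const_mul _ _
  have step2 : ∫ p : ℝ, G (p/(2*π)) = (2*π : ℝ) • ∫ ξ : ℝ, G ξ := by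
    rw [MeasureTheory.Measure.integral_comp_div G (2*π)]
    congr 1
    rw [abs_of_pos (by positivity)]
  rw [step1, step2, hGint, hinv]
  rw [Complex.real_smul]
  have hs : ((Real.sqrt (2*π) : ℝ) : ℂ) * ((Real.sqrt (2*π) : ℝ) : ℂ) = ((2*π : ℝ) : ℂ) := by
    norm_cast
    exact Real.mul_self_sqrt (by positivity)
  have hne : ((Real.sqrt (2*π) : ℝ) : ℂ) ≠ 0 :=
    Complex.ofReal_ne_zero.mpr (Real.sqrt_ne_zero'.mpr (by positivity))
  rw [Complex.ofReal_inv, ← hs]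
  rw [show (((Real.sqrt (2*π)):ℂ))⁻¹ * ((((Real.sqrt (2*π)):ℂ))⁻¹ *
      (((Real.sqrt (2*π)):ℂ) * ((Real.sqrt (2*π)):ℂ) * h y))
      = ((((Real.sqrt (2*π)):ℂ))⁻¹ * ((Real.sqrt (2*π)):ℂ)) *
        (((((Real.sqrt (2*π)):ℂ))⁻¹ * ((Real.sqrt (2*π)):ℂ)) * h y) from by ring,
    inv_mul_cancel₀ hne, one_mul, one_mul]

lemma my_min_step {z a : ℝ} (hz : 0 < z) (ha : 0 ≤ a) :
    min (z*a) 2 ≤ min z 1 * (a+2) := by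
  rcases le_total z 1 with h1 | h1
  · rw [min_eq_left h1]
    calc min (z*a) 2 ≤ z*a := min_le_left _ _
    _ ≤ z*(a+2) := by nlinarith
  · rw [min_eq_right h1]
    calc min (z*a) 2 ≤ 2 := min_le_right _ _
    _ = 1*2 := by ring
    _ ≤ 1*(a+2) := by nlinarith

theorem stmt4
    (η : ℝ → ℂ) (hηm : Measurable η)
    (hre : ∀ p : ℝ, (η p).re ≤ 0)
    (C : ℝ) (hC : 0 < C)
    (hbound : ∀ p : ℝ, ‖η p‖ ≤ C * (1 + p ^ 2))
    (ν : Measure ℝ) (hν0 : ν (Set.Iic (0 : ℝ)) = 0)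
    (hνfin : ∫⁻ s : ℝ, ENNReal.ofReal (min s 1) ∂ν < ⊤)
    (F : ℂ → ℂ)
    (hF : ∀ lam : ℂ, 0 ≤ lam.re →
      F lam = ∫ s : ℝ, (1 - Complex.exp (-(lam * s))) ∂ν)
    (h : SchwartzMap ℝ ℂ) (x : ℝ) :
    Integrable (fun zz : ℝ =>
      ((Real.sqrt (2 * Real.pi))⁻¹ *
        ∫ p : ℝ, Complex.exp (Complex.I * p * x) *
          (Complex.exp ((zz : ℂ) * η p) * fhat (⇑h) p)) - h x) ν ∧
    (∫ zz : ℝ, (((Real.sqrt (2 * Real.pi))⁻¹ *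
        ∫ p : ℝ, Complex.exp (Complex.I * p * x) *
          (Complex.exp ((zz : ℂ) * η p) * fhat (⇑h) p)) - h x) ∂ν)
      = (Real.sqrt (2 * Real.pi))⁻¹ *
          ∫ p : ℝ, Complex.exp (Complex.I * p * x) * (-(F (-(η p))) * fhat (⇑h) p) := by
  haveI : SigmaFinite ν := my_sigmaFinite ν hν0 hνfin
  set c : ℂ := (((Real.sqrt (2*π))⁻¹ : ℝ) : ℂ) with hcdef
  set g : ℝ → ℂ := fhat ⇑h with hgdef
  have hgint : Integrable g := my_fhat_integrable h
  have hgdecay : Integrable (fun p : ℝ => (1 + p^2) * ‖g p‖) := my_fhat_decay h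
  have hgcont : Continuous g := my_fhat_cont h
  have haepos : ∀ᵐ z ∂ν, 0 < z := by
    rw [ae_iff]
    convert hν0 using 2
    ext z
    simp [not_lt]
  -- norm computation for the integrand of T_z
  have hnorm1 : ∀ (z p : ℝ), ‖Complex.exp (Complex.I*p*x)‖ = 1 := by
    intro z p
    rw [Complex.norm_exp]
    norm_num [Complex.mul_re, Complex.mul_im]
  have hexple : ∀ (z : ℝ), 0 ≤ z → ∀ p : ℝ, ‖Complex.exp ((z:ℂ) * η p)‖ ≤ 1 := by
    intro z hz p
    rw [Complex.norm_exp]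
    rw [Real.exp_le_one_iff]
    have : ((z:ℂ) * η p).re = z * (η p).re := by simp
    rw [this]
    exact mul_nonpos_of_nonneg_of_nonpos hz (hre p)
  -- integrability of p ↦ exp(ipx) exp(zη) g and p ↦ exp(ipx) g
  have hT0 : Integrable (fun p : ℝ => Complex.exp (Complex.I*p*x) * g p) := by
    refine hgint.norm.mono' ?_ (Eventually.of_forall fun p => ?_)
    · have h1 : Measurable (fun p : ℝ => Complex.exp (Complex.I*p*x)) := by fun_prop
      exact (h1.mul hgcont.measurable).aestronglyMeasurable
    · simp only [norm_mul, hnorm1 0 p, one_mul, le_refl]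
  have hTint : ∀ z : ℝ, 0 ≤ z → Integrable (fun p : ℝ =>
      Complex.exp (Complex.I*p*x) * (Complex.exp ((z:ℂ) * η p) * g p)) := by
    intro z hz
    refine hgint.norm.mono' ?_ (Eventually.of_forall fun p => ?_)
    · have hm : Measurable (fun p : ℝ => Complex.exp (Complex.I*p*x) *
          (Complex.exp ((z:ℂ) * η p) * g p)) := by
        have h1 : Measurable (fun p : ℝ => Complex.exp (Complex.I*p*x)) := by
          fun_prop
        have h2 : Measurable (fun p : ℝ => Complex.exp ((z:ℂ) * η p)) :=
          (hηm.const_mul ((z:ℂ))).cexp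
        exact h1.mul (h2.mul hgcont.measurable)
      exact hm.aestronglyMeasurable
    · rw [norm_mul, norm_mul,
        hnorm1 z p, one_mul]
      calc ‖Complex.exp ((z:ℂ) * η p)‖ * ‖g p‖
          ≤ 1 * ‖g p‖ :=
            mul_le_mul_of_nonneg_right (hexple z hz p) (norm_nonneg _)
        _ = ‖g p‖ := by rw [one_mul]
  -- integrability of K z
  have hKint : ∀ z : ℝ, 0 ≤ z → Integrable (fun p : ℝ =>
      Complex.exp (Complex.I*p*x) * ((Complex.exp ((z:ℂ) * η p) - 1) * g p)) := by
    intro z hz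
    refine ((hTint z hz).sub hT0).congr (Eventually.of_forall fun p => ?_)
    simp only [Pi.sub_apply]
    ring
  -- per-z value
  have hval : ∀ z : ℝ, 0 ≤ z →
      ((c * ∫ p : ℝ, Complex.exp (Complex.I*p*x) *
        (Complex.exp ((z:ℂ) * η p) * g p)) - h x)
      = c * ∫ p : ℝ, Complex.exp (Complex.I*p*x) *
          ((Complex.exp ((z:ℂ) * η p) - 1) * g p) := by
    intro z hz
    have hsub : (∫ p : ℝ, Complex.exp (Complex.I*p*x) *
          ((Complex.exp ((z:ℂ) * η p) - 1) * g p))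
        = (∫ p : ℝ, Complex.exp (Complex.I*p*x) * (Complex.exp ((z:ℂ) * η p) * g p))
          - ∫ p : ℝ, Complex.exp (Complex.I*p*x) * g p := by
      rw [← integral_sub (hTint z hz) hT0]
      congr 1
      funext p
      ring
    rw [hsub, mul_sub, hcdef, hgdef, my_inversion h x]
  -- product measurability
  have hPmeas : AEStronglyMeasurable
      (fun q : ℝ × ℝ => Complex.exp (Complex.I*q.2*x) *
        ((Complex.exp ((q.1:ℂ) * η q.2) - 1) * g q.2)) (ν.prod volume) := by
    have h1 : Measurable (fun q : ℝ × ℝ => Complex.exp (Complex.I*q.2*x)) := by fun_prop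
    have h2 : Measurable (fun q : ℝ × ℝ => Complex.exp ((q.1:ℂ) * η q.2)) := by
      exact ((Complex.measurable_ofReal.comp measurable_fst).mul
        (hηm.comp measurable_snd)).cexp
    exact (h1.mul ((h2.sub measurable_const).mul
      (hgcont.measurable.comp measurable_snd))).aestronglyMeasurable
  -- bound on product
  have hmin : Integrable (fun z : ℝ => min z 1) ν := by
    constructor
    · exact (measurable_id.min measurable_const).aestronglyMeasurable
    · rw [hasFiniteIntegral_iff_norm]
      have : ∫⁻ z, ENNReal.ofReal ‖min z 1‖ ∂ν = ∫⁻ z, ENNReal.ofReal (min z 1) ∂ν := by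
        refine lintegral_congr_ae (haepos.mono fun z hz => ?_)
        show ENNReal.ofReal ‖min z 1‖ = ENNReal.ofReal (min z 1)
        rw [Real.norm_eq_abs, _root_.abs_of_nonneg (le_min hz.le one_pos.le)]
      rw [this]
      exact hνfin
  have hψ : Integrable (fun p : ℝ => (C*(1+p^2)+2) * ‖g p‖) := by
    refine ((hgdecay.const_mul C).add ((hgint.norm.const_mul 2))).congr
      (Eventually.of_forall fun p => ?_)
    simp only [Pi.add_apply]
    ring
  have hBint : Integrable (fun q : ℝ × ℝ => (min q.1 1) * ((C*(1+q.2^2)+2) * ‖g q.2‖))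
      (ν.prod volume) := hmin.mul_prod hψ
  have haeq : ∀ᵐ q : ℝ × ℝ ∂(ν.prod volume), 0 < q.1 := by
    rw [ae_iff]
    have hset : {q : ℝ × ℝ | ¬ 0 < q.1} = Set.Iic 0 ×ˢ Set.univ := by
      ext q; simp [not_lt]
    rw [hset, Measure.prod_prod, hν0, zero_mul]
  have hPbound : ∀ᵐ q : ℝ × ℝ ∂(ν.prod volume),
      ‖Complex.exp (Complex.I*q.2*x) *
        ((Complex.exp ((q.1:ℂ) * η q.2) - 1) * g q.2)‖
      ≤ (min q.1 1) * ((C*(1+q.2^2)+2) * ‖g q.2‖) := by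
    refine haeq.mono fun q hq => ?_
    obtain ⟨z, p⟩ := q
    simp only at hq ⊢
    rw [norm_mul, norm_mul,
      hnorm1 z p, one_mul]
    have hexp : ‖Complex.exp ((z:ℂ) * η p) - 1‖
        ≤ min (z * (C*(1+p^2))) 2 := by
      refine le_trans (my_exp_bound ?_) ?_
      · have : ((z:ℂ) * η p).re = z * (η p).re := by simp
        rw [this]
        exact mul_nonpos_of_nonneg_of_nonpos hq.le (hre p)
      · refine min_le_min ?_ le_rfl
        rw [norm_mul, Complex.norm_real, Real.norm_eq_abs, _root_.abs_of_nonneg hq.le]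
        exact mul_le_mul_of_nonneg_left (hbound p) hq.le
    have hstep : min (z * (C*(1+p^2))) 2 ≤ min z 1 * (C*(1+p^2)+2) :=
      my_min_step hq (by positivity)
    calc ‖Complex.exp ((z:ℂ) * η p) - 1‖ * ‖g p‖
        ≤ (min z 1 * (C*(1+p^2)+2)) * ‖g p‖ :=
          mul_le_mul_of_nonneg_right (le_trans hexp hstep) (norm_nonneg _)
      _ = min z 1 * ((C*(1+p^2)+2) * ‖g p‖) := by
          ring
  have hPint : Integrable (fun q : ℝ × ℝ => Complex.exp (Complex.I*q.2*x) *
      ((Complex.exp ((q.1:ℂ) * η q.2) - 1) * g q.2)) (ν.prod volume) :=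
    hBint.mono' hPmeas hPbound
  -- outer integrability
  have hIntp : Integrable (fun z : ℝ => ∫ p : ℝ, Complex.exp (Complex.I*p*x) *
      ((Complex.exp ((z:ℂ) * η p) - 1) * g p)) ν := hPint.integral_prod_left
  have hcong : (fun z : ℝ => (c * ∫ p : ℝ, Complex.exp (Complex.I*p*x) *
        (Complex.exp ((z:ℂ) * η p) * g p)) - h x)
      =ᵐ[ν] (fun z : ℝ => c * ∫ p : ℝ, Complex.exp (Complex.I*p*x) *
        ((Complex.exp ((z:ℂ) * η p) - 1) * g p)) :=
    haepos.mono fun z hz => hval z hz.le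
  constructor
  · exact (hIntp.const_mul c).congr hcong.symm
  · rw [integral_congr_ae hcong, integral_const_mul]
    congr 1
    rw [integral_integral_swap hPint]
    refine integral_congr_ae (Eventually.of_forall fun p => ?_)
    show (∫ z : ℝ, Complex.exp (Complex.I*p*x) *
        ((Complex.exp ((z:ℂ) * η p) - 1) * g p) ∂ν)
      = Complex.exp (Complex.I*p*x) * (-(F (-(η p))) * g p)
    have hzm : Measurable (fun z : ℝ => Complex.exp ((z:ℂ) * η p) - 1) :=
      (Complex.measurable_ofReal.mul_const (η p)).cexp.sub measurable_const
    have hzint : Integrable (fun z : ℝ => Complex.exp ((z:ℂ) * η p) - 1) ν := by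
      refine (hmin.mul_const (C*(1+p^2)+2)).mono' hzm.aestronglyMeasurable
        (haepos.mono fun z hz => ?_)
      have hexp : ‖Complex.exp ((z:ℂ) * η p) - 1‖
          ≤ min (z * (C*(1+p^2))) 2 := by
        refine le_trans (my_exp_bound ?_) ?_
        · have : ((z:ℂ) * η p).re = z * (η p).re := by simp
          rw [this]
          exact mul_nonpos_of_nonneg_of_nonpos hz.le (hre p)
        · refine min_le_min ?_ le_rfl
          rw [norm_mul, Complex.norm_real, Real.norm_eq_abs, _root_.abs_of_nonneg hz.le]
          exact mul_le_mul_of_nonneg_left (hbound p) hz.le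
      exact le_trans hexp (my_min_step hz (by positivity))
    have hfac : ∫ z : ℝ, Complex.exp (Complex.I*p*x) *
        ((Complex.exp ((z:ℂ) * η p) - 1) * g p) ∂ν
        = Complex.exp (Complex.I*p*x) *
          ((∫ z : ℝ, (Complex.exp ((z:ℂ) * η p) - 1) ∂ν) * g p) := by
      rw [integral_const_mul]
      congr 1
      rw [integral_mul_const]
    rw [hfac]
    congr 1
    have hFe : F (-(η p)) = ∫ s : ℝ, (1 - Complex.exp (-(-(η p) * s))) ∂ν := by
      refine hF (-(η p)) ?_
      rw [Complex.neg_re]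
      linarith [hre p]
    rw [hFe]
    congr 1
    rw [← integral_neg]
    refine integral_congr_ae (Eventually.of_forall fun z => ?_)
    show Complex.exp ((z:ℂ) * η p) - 1 = -(1 - Complex.exp (-(-(η p) * (z:ℂ))))
    have harg : -(-(η p) * (z:ℂ)) = (z:ℂ) * η p := by ring
    rw [harg]
    ring
end

section
/- Let α : [0,∞) → (0,2] and θ : [0,∞) → ℝ be continuous with |θ(t)| ≤ min{α(t), 2−α(t)} for all t, let b > 0, s ≥ 0 and f ∈ 𝒮(ℝ). For t ≥ s and x ∈ ℝ define u(x,t) = (2π)^{-1/2} ∫_ℝ e^{iξx} exp( −∫_s^t Log(1 + b ψ_{α(τ),θ(τ)}(ξ)) dτ ) f̂(ξ) dξ. Then u(x,s) = f(x) for all x, and for every x ∈ ℝ and t ≥ s the function t ↦ u(x,t) is differentiable with ∂_t u(x,t) = (2π)^{-1/2} ∫_ℝ e^{iξx} ( −Log(1 + b ψ_{α(t),θ(t)}(ξ)) ) exp( −∫_s^t Log(1 + b ψ_{α(τ),θ(τ)}(ξ)) dτ ) f̂(ξ) dξ; that is, u solves the initial value problem ∂_t u = 𝒫_b^{α(t),θ(t)}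 u, u(·,s) = f, for the time-dependent logarithmic Fourier-multiplier operator with symbol −Log(1 + b ψ_{α(t),θ(t)}(ξ)). -/
set_option maxHeartbeats 1600000

open MeasureTheory Complex Real Filter Topology
open scoped FourierTransform

/-- Feller symbol `ψ_{α,θ}(ξ) = |ξ|^α e^{i sign(ξ) θ π / 2}` of the α-stable process. -/
noncomputable def feller (α θ ξ : ℝ) : ℂ :=
  ((|ξ| ^ α : ℝ) : ℂ) * Complex.exp (Complex.I * Real.sign ξ * θ * Real.pi / 2)

namespace Stmt9Aux


lemma fhat_eq (f : ℝ → ℂ) (p : ℝ) :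
    fhat f p = (Real.sqrt (2 * Real.pi))⁻¹ * 𝓕 f (p / (2 * Real.pi)) := by
  rw [Real.fourier_real_eq_integral_exp_smul, fhat]
  congr 1
  refine integral_congr_ae (Filter.Eventually.of_forall fun v => ?_)
  simp only [smul_eq_mul]
  congr 1
  have hπ : (Real.pi : ℝ) ≠ 0 := Real.pi_ne_zero
  have h : (-2 * Real.pi * v * (p / (2 * Real.pi)) : ℝ) = -(p * v) := by
    field_simp
  rw [h]
  push_cast
  ring

lemma fhat_continuous (f : SchwartzMap ℝ ℂ) : Continuous (fhat ⇑f) := by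
  have hg : Continuous (𝓕 ⇑f) := by
    rw [← SchwartzMap.fourier_coe, ← SchwartzMap.fourierTransformCLM_apply ℝ f]
    exact (SchwartzMap.fourierTransformCLM ℝ f).continuous
  have h : fhat ⇑f = fun p => ((Real.sqrt (2 * Real.pi))⁻¹ : ℝ) * 𝓕 ⇑f (p / (2 * Real.pi)) :=
    funext (fhat_eq ⇑f)
  rw [h]
  exact continuous_const.mul (hg.comp (continuous_id.div_const _))

lemma cont_z {αf θf : ℝ → ℝ} (hαc : Continuous αf) (hθc : Continuous θf) (b : ℝ) {ξ : ℝ}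
    (hξ : ξ ≠ 0) : Continuous fun τ => 1 + (b : ℂ) * feller (αf τ) (θf τ) ξ := by
  have h1 : Continuous fun τ => (|ξ| ^ αf τ : ℝ) :=
    Continuous.rpow continuous_const hαc (fun τ => Or.inl (by simpa using hξ))
  refine continuous_const.add (continuous_const.mul ?_)
  unfold feller
  exact (Complex.continuous_ofReal.comp h1).mul (Complex.continuous_exp.comp
    (((continuous_const.mul (Complex.continuous_ofReal.comp hθc)).mul continuous_const).div_const 2))

lemma measurable_sign : Measurable Real.sign := by
  have h : Real.sign = fun r : ℝ => if r < 0 then (-1 : ℝ) else if 0 < r then 1 else 0 :=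
    funext fun r => rfl
  rw [h]
  exact Measurable.ite measurableSet_Iio measurable_const
    (Measurable.ite measurableSet_Ioi measurable_const measurable_const)

noncomputable def Lnice (αf θf : ℝ → ℝ) (b : ℝ) (p : ℝ × ℝ) : ℂ :=
  Complex.log (1 + (b : ℂ) * (((Real.exp (Real.log |p.1| * αf p.2)) : ℂ) *
    Complex.exp (Complex.I * Real.sign p.1 * θf p.2 * Real.pi / 2)))

lemma measurable_Lnice {αf θf : ℝ → ℝ} (hαc : Continuous αf) (hθc : Continuous θf) (b : ℝ) :
    Measurable (Lnice αf θf b) := by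
  apply Measurable.clog
  apply measurable_const.add
  apply measurable_const.mul
  apply Measurable.mul
  · exact Complex.measurable_ofReal.comp (Real.measurable_exp.comp
      ((Real.measurable_log.comp (_root_.continuous_abs.measurable.comp measurable_fst)).mul
        (hαc.measurable.comp measurable_snd)))
  · apply Measurable.cexp
    exact (((measurable_const.mul (Complex.measurable_ofReal.comp
      (measurable_sign.comp measurable_fst))).mul (Complex.measurable_ofReal.comp
        (hθc.measurable.comp measurable_snd))).mul measurable_const).div_const 2

lemma Lnice_eq {αf θf : ℝ → ℝ} {b : ℝ} {ξ : ℝ} (hξ : ξ ≠ 0) (τ : ℝ) :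
    Complex.log (1 + (b : ℂ) * feller (αf τ) (θf τ) ξ) = Lnice αf θf b (ξ, τ) := by
  unfold Lnice feller
  rw [Real.rpow_def_of_pos (abs_pos.mpr hξ)]

lemma ae_ne_zero : ∀ᵐ ξ : ℝ, ξ ≠ 0 := by
  rw [ae_iff]
  simp only [not_not]
  have : {a : ℝ | a = 0} = {0} := by ext a; simp
  rw [this]
  exact measure_singleton 0

lemma aesm_inner {αf θf : ℝ → ℝ} (hαc : Continuous αf) (hθc : Continuous θf) (b s t' : ℝ) :
    AEStronglyMeasurable (fun ξ : ℝ =>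
      ∫ τ in s..t', Complex.log (1 + (b : ℂ) * feller (αf τ) (θf τ) ξ)) volume := by
  have hm := (measurable_Lnice hαc hθc b).stronglyMeasurable
  have h1 : StronglyMeasurable fun ξ : ℝ => ∫ τ in Set.Ioc s t', Lnice αf θf b (ξ, τ) :=
    hm.integral_prod_right'
  have h2 : StronglyMeasurable fun ξ : ℝ => ∫ τ in Set.Ioc t' s, Lnice αf θf b (ξ, τ) :=
    hm.integral_prod_right'
  refine ((h1.sub h2).aestronglyMeasurable).congr ?_
  filter_upwards [ae_ne_zero] with ξ hξ
  have hfun : (fun τ => Lnice αf θf b (ξ, τ)) =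
      fun τ => Complex.log (1 + (b : ℂ) * feller (αf τ) (θf τ) ξ) :=
    funext fun τ => (Lnice_eq hξ τ).symm
  show (∫ τ in Set.Ioc s t', Lnice αf θf b (ξ, τ)) -
      (∫ τ in Set.Ioc t' s, Lnice αf θf b (ξ, τ)) = _
  simp only [hfun]
  rfl

lemma aesm_Lt {αf θf : ℝ → ℝ} (hαc : Continuous αf) (hθc : Continuous θf) (b t : ℝ) :
    AEStronglyMeasurable (fun ξ : ℝ =>
      Complex.log (1 + (b : ℂ) * feller (αf t) (θf t) ξ)) volume := by
  have hm : Measurable fun ξ : ℝ => Lnice αf θf b (ξ, t) :=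
    (measurable_Lnice hαc hθc b).comp (measurable_id.prodMk measurable_const)
  refine hm.aestronglyMeasurable.congr ?_
  filter_upwards [ae_ne_zero] with ξ hξ
  exact (Lnice_eq hξ t).symm

lemma integrable_poly_fhat (f : SchwartzMap ℝ ℂ) (M : ℕ) :
    Integrable (fun ξ : ℝ => (1 + ξ ^ 2) ^ M * ‖fhat ⇑f ξ‖) := by
  have hπ : (0 : ℝ) < 2 * Real.pi := by positivity
  set g := SchwartzMap.fourierTransformCLM ℝ f with hgdef
  have hg : ⇑g = 𝓕 ⇑f := rfl
  set h : ℝ → ℝ := fun η => (1 + (2 * Real.pi * η) ^ 2) ^ M * ‖(𝓕 ⇑f) η‖ with hhdef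
  have hgc : Continuous (𝓕 ⇑f) := hg ▸ g.continuous
  have hh_cont : Continuous h := by
    apply Continuous.mul _ hgc.norm
    exact (continuous_const.add ((continuous_const.mul continuous_id).pow 2)).pow M
  have hmaj : ∀ η : ℝ, h η ≤ ((1 + 4 * Real.pi ^ 2) ^ M * 2 ^ M) *
      (‖(𝓕 ⇑f) η‖ + ‖η‖ ^ (2 * M) * ‖(𝓕 ⇑f) η‖) := by
    intro η
    have hg0 : (0 : ℝ) ≤ ‖(𝓕 ⇑f) η‖ := norm_nonneg _
    have step1 : (1 + (2 * Real.pi * η) ^ 2) ≤ (1 + 4 * Real.pi ^ 2) * (1 + η ^ 2) := by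
      nlinarith [sq_nonneg η, sq_nonneg Real.pi, sq_nonneg (Real.pi * η)]
    have step1' : (1 + (2 * Real.pi * η) ^ 2) ^ M ≤ ((1 + 4 * Real.pi ^ 2) * (1 + η ^ 2)) ^ M :=
      pow_le_pow_left₀ (by positivity) step1 M
    have step2 : (1 + η ^ 2) ^ M ≤ 2 ^ M * (1 + η ^ (2 * M)) := by
      have h2 : (1 + η ^ 2) ≤ 2 * max 1 (η ^ 2) := by
        rcases le_total (η ^ 2) 1 with hc | hc
        · rw [max_eq_left hc]; linarith
        · rw [max_eq_right hc]; linarith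
      calc (1 + η ^ 2) ^ M ≤ (2 * max 1 (η ^ 2)) ^ M := pow_le_pow_left₀ (by positivity) h2 M
        _ = 2 ^ M * (max 1 (η ^ 2)) ^ M := mul_pow _ _ _
        _ ≤ 2 ^ M * (1 + η ^ (2 * M)) := by
            have hpos : (0 : ℝ) ≤ η ^ (2 * M) := by rw [pow_mul]; positivity
            refine mul_le_mul_of_nonneg_left ?_ (by positivity)
            rcases le_total (η ^ 2) 1 with hc | hc
            · rw [max_eq_left hc, one_pow]; linarith
            · rw [max_eq_right hc, pow_mul]
              have : (0:ℝ) ≤ (η ^ 2) ^ M := by positivity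
              rw [pow_mul] at hpos
              linarith
    have hnorm : ‖η‖ ^ (2 * M) = η ^ (2 * M) := by
      rw [Real.norm_eq_abs, pow_mul, _root_.sq_abs, ← pow_mul]
    calc h η = (1 + (2 * Real.pi * η) ^ 2) ^ M * ‖(𝓕 ⇑f) η‖ := rfl
      _ ≤ ((1 + 4 * Real.pi ^ 2) * (1 + η ^ 2)) ^ M * ‖(𝓕 ⇑f) η‖ :=
          mul_le_mul_of_nonneg_right step1' hg0
      _ = (1 + 4 * Real.pi ^ 2) ^ M * ((1 + η ^ 2) ^ M * ‖(𝓕 ⇑f) η‖) := by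
          rw [mul_pow]; ring
      _ ≤ (1 + 4 * Real.pi ^ 2) ^ M * ((2 ^ M * (1 + η ^ (2 * M))) * ‖(𝓕 ⇑f) η‖) := by
          apply mul_le_mul_of_nonneg_left (mul_le_mul_of_nonneg_right step2 hg0) (by positivity)
      _ = ((1 + 4 * Real.pi ^ 2) ^ M * 2 ^ M) * (‖(𝓕 ⇑f) η‖ + η ^ (2 * M) * ‖(𝓕 ⇑f) η‖) := by
          ring
      _ = ((1 + 4 * Real.pi ^ 2) ^ M * 2 ^ M) * (‖(𝓕 ⇑f) η‖ + ‖η‖ ^ (2 * M) * ‖(𝓕 ⇑f) η‖) := by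
          rw [hnorm]
    exact le_rfl
  have hmaj_int : Integrable (fun η : ℝ => ((1 + 4 * Real.pi ^ 2) ^ M * 2 ^ M) *
      (‖(𝓕 ⇑f) η‖ + ‖η‖ ^ (2 * M) * ‖(𝓕 ⇑f) η‖)) := by
    apply Integrable.const_mul
    have h1 : Integrable (fun η : ℝ => ‖(𝓕 ⇑f) η‖) := (hg ▸ g.integrable).norm
    have h2 : Integrable (fun η : ℝ => ‖η‖ ^ (2 * M) * ‖(𝓕 ⇑f) η‖) := by
      have := g.integrable_pow_mul (volume) (2 * M)
      rwa [hg] at this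
    exact h1.add h2
  have hh_int : Integrable h := by
    apply hmaj_int.mono' hh_cont.aestronglyMeasurable
    refine ae_of_all _ fun η => ?_
    have hnn : 0 ≤ h η := by
      simp only [hhdef]; positivity
    rw [Real.norm_eq_abs, _root_.abs_of_nonneg hnn]
    exact hmaj η
  have hcomp : Integrable (fun ξ : ℝ => h (ξ / (2 * Real.pi))) :=
    hh_int.comp_div (by positivity)
  have hfinal : (fun ξ : ℝ => (1 + ξ ^ 2) ^ M * ‖fhat ⇑f ξ‖) =
      fun ξ : ℝ => (Real.sqrt (2 * Real.pi))⁻¹ * h (ξ / (2 * Real.pi)) := by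
    funext ξ
    rw [fhat_eq]
    have hx : (2 * Real.pi * (ξ / (2 * Real.pi))) ^ 2 = ξ ^ 2 := by field_simp
    simp only [hhdef, hx]
    rw [norm_mul, Complex.norm_real, Real.norm_eq_abs,
      _root_.abs_of_nonneg (inv_nonneg.mpr (Real.sqrt_nonneg _))]
    ring
  rw [hfinal]
  exact hcomp.const_mul _


lemma part1 (f : SchwartzMap ℝ ℂ) (x : ℝ) :
    (((Real.sqrt (2 * Real.pi))⁻¹ : ℝ) : ℂ) *
      ∫ ξ : ℝ, Complex.exp (Complex.I * ξ * x) * fhat (⇑f) ξ = f x := by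
  have hπ : (0:ℝ) < 2 * Real.pi := by positivity
  set g := SchwartzMap.fourierTransformCLM ℝ f with hgdef
  have hg : ⇑g = 𝓕 ⇑f := rfl
  have hGint : Integrable (𝓕 ⇑f) := hg ▸ g.integrable
  set W : ℝ → ℂ := fun v =>
    Complex.exp (((2 * Real.pi * (v * x) : ℝ) : ℂ) * Complex.I) * 𝓕 (⇑f) v with hW
  have hWint : ∫ v, W v = f x := by
    have hinv := Continuous.fourierInv_fourier_eq f.continuous f.integrable hGint
    have h2 : 𝓕⁻ (𝓕 ⇑f) x = ∫ v, W v := by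
      rw [Real.fourierInv_eq']
      refine integral_congr_ae (Filter.Eventually.of_forall fun v => ?_)
      simp only [smul_eq_mul, RCLike.inner_apply, conj_trivial, hW]
      rw [mul_comm x v]
    rw [← h2, hinv]
  have hstep : ∀ ξ : ℝ, Complex.exp (Complex.I * ξ * x) * fhat (⇑f) ξ
      = (((Real.sqrt (2 * Real.pi))⁻¹ : ℝ) : ℂ) * W (ξ / (2 * Real.pi)) := by
    intro ξ
    rw [fhat_eq]
    simp only [hW]
    have h : (2 * Real.pi * ((ξ / (2 * Real.pi)) * x) : ℝ) = ξ * x := by field_simp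
    rw [h]
    push_cast
    ring
  have hcoef : ((Real.sqrt (2 * Real.pi))⁻¹ * ((Real.sqrt (2 * Real.pi))⁻¹ * (2 * Real.pi)) : ℝ)
      = 1 := by
    have h := Real.mul_self_sqrt hπ.le
    have hne : Real.sqrt (2 * Real.pi) ≠ 0 := by positivity
    rw [← mul_assoc, ← mul_inv, h]
    exact inv_mul_cancel₀ hπ.ne'
  calc (((Real.sqrt (2 * Real.pi))⁻¹ : ℝ) : ℂ) * ∫ ξ : ℝ, Complex.exp (Complex.I * ξ * x) * fhat (⇑f) ξ
      = (((Real.sqrt (2 * Real.pi))⁻¹ : ℝ) : ℂ) *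
        ∫ ξ : ℝ, (((Real.sqrt (2 * Real.pi))⁻¹ : ℝ) : ℂ) * W (ξ / (2 * Real.pi)) := by
        congr 1
        exact integral_congr_ae (Filter.Eventually.of_forall hstep)
    _ = (((Real.sqrt (2 * Real.pi))⁻¹ : ℝ) : ℂ) * ((((Real.sqrt (2 * Real.pi))⁻¹ : ℝ) : ℂ) *
        ∫ ξ : ℝ, W (ξ / (2 * Real.pi))) := by rw [integral_const_mul]
    _ = (((Real.sqrt (2 * Real.pi))⁻¹ : ℝ) : ℂ) * ((((Real.sqrt (2 * Real.pi))⁻¹ : ℝ) : ℂ) *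
        ((|2 * Real.pi| : ℝ) • ∫ v, W v)) := by rw [MeasureTheory.Measure.integral_comp_div]
    _ = f x := by
        rw [hWint, abs_of_pos hπ, Complex.real_smul, ← mul_assoc, ← mul_assoc,
          ← Complex.ofReal_mul, ← Complex.ofReal_mul]
        rw [show ((Real.sqrt (2 * Real.pi))⁻¹ * (Real.sqrt (2 * Real.pi))⁻¹ * (2 * Real.pi) : ℝ) = 1
          by rw [mul_assoc]; exact hcoef]
        simp


lemma abs_sign_le (ξ : ℝ) : |Real.sign ξ| ≤ 1 := by
  rcases lt_trichotomy ξ 0 with h | h | h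
  · rw [Real.sign_of_neg h]; norm_num
  · subst h; rw [Real.sign_zero]; norm_num
  · rw [Real.sign_of_pos h]; norm_num

lemma feller_decomp (a th ξ : ℝ) :
    feller a th ξ = ((|ξ| ^ a : ℝ) : ℂ) *
      Complex.exp (((Real.sign ξ * th * Real.pi / 2 : ℝ) : ℂ) * Complex.I) := by
  unfold feller
  congr 1
  congr 1
  push_cast
  ring

lemma symbol_props {b a th : ℝ} (hb : 0 < b) (ha0 : 0 < a) (ha3 : a ≤ 3)
    (hth : |th| ≤ 3 / 2) (ξ : ℝ) :
    (1 + (b : ℂ) * feller a th ξ) ∈ Complex.slitPlane ∧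
    ‖Complex.log (1 + (b : ℂ) * feller a th ξ)‖
      ≤ Real.log (1 + b * (1 + ξ ^ 2) ^ 2) + 1 + Real.pi := by
  set R : ℝ := |ξ| ^ a with hRdef
  have hR0 : 0 ≤ R := Real.rpow_nonneg (abs_nonneg ξ) a
  set φ : ℝ := Real.sign ξ * th * Real.pi / 2 with hφdef
  set z : ℂ := 1 + (b : ℂ) * feller a th ξ with hzdef
  have hre' : ∀ (r ψ : ℝ), ((1:ℂ) + (b:ℂ) * ((r:ℂ) * Complex.exp ((ψ:ℂ) * Complex.I))).re
      = 1 + b * r * Real.cos ψ := fun r ψ => by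
    simp only [Complex.add_re, Complex.one_re, Complex.mul_re, Complex.ofReal_re,
      Complex.ofReal_im, Complex.exp_ofReal_mul_I_re, Complex.exp_ofReal_mul_I_im]
    ring
  have him' : ∀ (r ψ : ℝ), ((1:ℂ) + (b:ℂ) * ((r:ℂ) * Complex.exp ((ψ:ℂ) * Complex.I))).im
      = b * r * Real.sin ψ := fun r ψ => by
    simp only [Complex.add_im, Complex.one_im, Complex.mul_im, Complex.mul_re, Complex.ofReal_re,
      Complex.ofReal_im, Complex.exp_ofReal_mul_I_re, Complex.exp_ofReal_mul_I_im]
    ring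
  have hzre : z.re = 1 + b * R * Real.cos φ := by
    rw [hzdef, feller_decomp]; exact hre' R φ
  have hzim : z.im = b * R * Real.sin φ := by
    rw [hzdef, feller_decomp]; exact him' R φ
  have hφabs : |φ| ≤ 3 * Real.pi / 4 := by
    rw [hφdef]
    have h1 : |Real.sign ξ * th * Real.pi / 2| = |Real.sign ξ| * |th| * Real.pi / 2 := by
      rw [abs_div, abs_mul, abs_mul, abs_of_pos Real.pi_pos]
      norm_num
    rw [h1]
    have h2 : |Real.sign ξ| * |th| ≤ 3 / 2 := by
      calc |Real.sign ξ| * |th| ≤ 1 * (3 / 2) :=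
        mul_le_mul (abs_sign_le ξ) hth (abs_nonneg th) zero_le_one
      _ = 3 / 2 := by norm_num
    nlinarith [Real.pi_pos]
  have hcos : -(Real.sqrt 2 / 2) ≤ Real.cos φ := by
    have h34 : Real.cos (3 * Real.pi / 4) = -(Real.sqrt 2 / 2) := by
      rw [show (3 * Real.pi / 4 : ℝ) = Real.pi - Real.pi / 4 by ring, Real.cos_pi_sub,
        Real.cos_pi_div_four]
    calc -(Real.sqrt 2 / 2) = Real.cos (3 * Real.pi / 4) := h34.symm
      _ ≤ Real.cos |φ| := by
          apply Real.cos_le_cos_of_nonneg_of_le_pi (abs_nonneg φ) _ hφabs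
          nlinarith [Real.pi_pos]
      _ = Real.cos φ := Real.cos_abs φ
  have hsqrt2 : Real.sqrt 2 * Real.sqrt 2 = 2 := Real.mul_self_sqrt (by norm_num)
  have habs2 : ‖z‖ ^ 2 = 1 + 2 * (b * R) * Real.cos φ + (b * R) ^ 2 := by
    rw [Complex.sq_norm, Complex.normSq_apply, hzre, hzim]
    nlinarith [Real.sin_sq_add_cos_sq φ]
  have hlow : 1 / 2 ≤ ‖z‖ ^ 2 := by
    rw [habs2]
    nlinarith [sq_nonneg (b * R - Real.sqrt 2 / 2), mul_nonneg hb.le hR0,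
      mul_le_mul_of_nonneg_left hcos (mul_nonneg hb.le hR0)]
  have habslow : (Real.sqrt 2)⁻¹ ≤ ‖z‖ := by
    have h1 : ((Real.sqrt 2)⁻¹) ^ 2 = 1 / 2 := by
      rw [inv_pow, sq, hsqrt2]; norm_num
    nlinarith [norm_nonneg z, inv_nonneg.mpr (Real.sqrt_nonneg 2), h1, hlow]
  have hRle : R ≤ (1 + ξ ^ 2) ^ 2 := by
    rcases le_total |ξ| 1 with h | h
    · calc R ≤ 1 := Real.rpow_le_one (abs_nonneg ξ) h ha0.le
        _ ≤ (1 + ξ ^ 2) ^ 2 := by nlinarith [sq_nonneg ξ]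
    · calc R ≤ |ξ| ^ (3 : ℝ) := Real.rpow_le_rpow_of_exponent_le h ha3
        _ = |ξ| ^ (3 : ℕ) := by rw [← Real.rpow_natCast]; norm_num
        _ ≤ (1 + ξ ^ 2) ^ 2 := by nlinarith [_root_.sq_abs ξ, abs_nonneg ξ, h]
  have habshi : ‖z‖ ≤ 1 + b * (1 + ξ ^ 2) ^ 2 := by
    have h1 : ‖(b : ℂ) * feller a th ξ‖ = b * R := by
      rw [feller_decomp, norm_mul, norm_mul, Complex.norm_real, Complex.norm_real, Real.norm_eq_abs,
        Real.norm_eq_abs, Complex.norm_exp_ofReal_mul_I, _root_.abs_of_pos hb,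
        _root_.abs_of_nonneg hR0]
      ring
    calc ‖z‖ ≤ ‖(1 : ℂ)‖ + ‖(b : ℂ) * feller a th ξ‖ := by
          rw [hzdef]; exact norm_add_le _ _
      _ = 1 + b * R := by rw [norm_one, h1]
      _ ≤ 1 + b * (1 + ξ ^ 2) ^ 2 := by nlinarith
  have hD1 : (1 : ℝ) ≤ 1 + b * (1 + ξ ^ 2) ^ 2 := by nlinarith [sq_nonneg ξ, sq_nonneg (1 + ξ^2)]
  have hzpos : 0 < ‖z‖ := lt_of_lt_of_le (by positivity) habslow
  constructor
  · rw [Complex.mem_slitPlane_iff]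
    by_cases hRz : R = 0
    · left; rw [hzre, hRz]; simp
    · have hRpos : 0 < R := lt_of_le_of_ne hR0 (Ne.symm hRz)
      by_cases hsin : Real.sin φ = 0
      · left
        obtain ⟨n, hn⟩ := Real.sin_eq_zero_iff.mp hsin
        have hn0 : n = 0 := by
          have h0 : |(n : ℝ) * Real.pi| ≤ 3 * Real.pi / 4 := by rw [hn]; exact hφabs
          have h1 : |(n : ℝ)| * Real.pi ≤ 3 * Real.pi / 4 := by
            rwa [abs_mul, _root_.abs_of_pos Real.pi_pos] at h0
          have h2 : |(n : ℝ)| < 1 := by nlinarith [Real.pi_pos]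
          have h3 : ((|n| : ℤ) : ℝ) < 1 := by rwa [← Int.cast_abs] at h2
          have h4 : |n| < 1 := by exact_mod_cast h3
          have h5 := abs_lt.mp h4
          omega
        have hφ0 : φ = 0 := by
          have h5 : φ = (n : ℝ) * Real.pi := hn.symm
          rw [h5, hn0]; simp
        rw [hzre, hφ0, Real.cos_zero]
        nlinarith
      · right; rw [hzim]; exact mul_ne_zero (mul_ne_zero hb.ne' hRz) hsin
  · have hlog_decomp : ‖Complex.log z‖ ≤ |Real.log ‖z‖| + |Complex.arg z| := by
      calc ‖Complex.log z‖ ≤ |(Complex.log z).re| + |(Complex.log z).im| :=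
            Complex.norm_le_abs_re_add_abs_im _
        _ = |Real.log ‖z‖| + |Complex.arg z| := by
            rw [Complex.log_re, Complex.log_im]
    have hup : Real.log ‖z‖ ≤ Real.log (1 + b * (1 + ξ ^ 2) ^ 2) :=
      Real.log_le_log hzpos habshi
    have hlogD0 : 0 ≤ Real.log (1 + b * (1 + ξ ^ 2) ^ 2) := Real.log_nonneg hD1
    have hlo : -(1 : ℝ) ≤ Real.log ‖z‖ := by
      have h1 : Real.log ((Real.sqrt 2)⁻¹) ≤ Real.log ‖z‖ :=
        Real.log_le_log (by positivity) habslow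
      have h2 : Real.log (Real.sqrt 2) ≤ 1 := by
        have h3 := Real.log_le_sub_one_of_pos (show (0:ℝ) < Real.sqrt 2 by positivity)
        have h4 : Real.sqrt 2 ≤ 2 := by nlinarith [Real.sqrt_nonneg 2, hsqrt2]
        linarith
      rw [Real.log_inv] at h1
      linarith
    have habslog : |Real.log ‖z‖| ≤ Real.log (1 + b * (1 + ξ ^ 2) ^ 2) + 1 := by
      rw [abs_le]; constructor <;> [linarith; linarith]
    calc ‖Complex.log z‖ ≤ |Real.log ‖z‖| + |Complex.arg z| := hlog_decomp
      _ ≤ (Real.log (1 + b * (1 + ξ ^ 2) ^ 2) + 1) + Real.pi := by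
          have := Complex.abs_arg_le_pi z
          gcongr
      _ = Real.log (1 + b * (1 + ξ ^ 2) ^ 2) + 1 + Real.pi := by ring


lemma part2 (α θ : ℝ → ℝ) (hαc : Continuous α) (hθc : Continuous θ)
    (hα : ∀ t : ℝ, 0 ≤ t → α t ∈ Set.Ioc (0 : ℝ) 2)
    (hθ : ∀ t : ℝ, 0 ≤ t → |θ t| ≤ min (α t) (2 - α t))
    (b : ℝ) (hb : 0 < b) (s : ℝ) (hs : 0 ≤ s) (f : SchwartzMap ℝ ℂ)
    (x t : ℝ) (hst : s ≤ t) :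
    HasDerivAt (fun t' : ℝ => ∫ ξ : ℝ, Complex.exp (Complex.I * ξ * x) *
        (Complex.exp (-(∫ τ in s..t',
            Complex.log (1 + (b : ℂ) * feller (α τ) (θ τ) ξ))) * fhat (⇑f) ξ))
      (∫ ξ : ℝ, Complex.exp (Complex.I * ξ * x) *
        ((-Complex.log (1 + (b : ℂ) * feller (α t) (θ t) ξ)) *
          (Complex.exp (-(∫ τ in s..t,
              Complex.log (1 + (b : ℂ) * feller (α τ) (θ τ) ξ))) * fhat (⇑f) ξ))) t := by
  have ht0 : 0 ≤ t := hs.trans hst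
  obtain ⟨hαt1, hαt2⟩ := hα t ht0
  -- choose the radius r of good behavior
  obtain ⟨δ₁, hδ₁, hδ₁p⟩ := Metric.continuousAt_iff.mp hθc.continuousAt (1/2) (by norm_num)
  obtain ⟨δ₂, hδ₂, hδ₂p⟩ := Metric.continuousAt_iff.mp hαc.continuousAt (min (α t / 2) 1)
    (lt_min (by linarith) one_pos)
  set r : ℝ := min δ₁ δ₂ / 2 with hrdef
  have hrpos : 0 < r := half_pos (lt_min hδ₁ hδ₂)
  have hmin_le1 : ∀ u : ℝ, 0 ≤ u → min (α u) (2 - α u) ≤ 3/2 := by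
    intro u hu
    rcases le_total (α u) 1 with h | h
    · exact le_trans (min_le_left _ _) (by linarith)
    · exact le_trans (min_le_right _ _) (by linarith)
  have hgood : ∀ τ : ℝ, |τ - t| ≤ r → |θ τ| ≤ 3/2 ∧ 0 < α τ ∧ α τ ≤ 3 := by
    intro τ hτ
    have hd1 : dist τ t < δ₁ := by
      rw [Real.dist_eq]
      have := min_le_left δ₁ δ₂; linarith
    have hd2 : dist τ t < δ₂ := by
      rw [Real.dist_eq]
      have := min_le_right δ₁ δ₂; linarith
    have h1 := hδ₁p hd1
    have h2 := hδ₂p hd2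
    rw [Real.dist_eq] at h1 h2
    have hθt : |θ t| ≤ 1 := le_trans (hθ t ht0) (by
      rcases le_total (α t) 1 with h | h
      · exact le_trans (min_le_left _ _) h
      · exact le_trans (min_le_right _ _) (by linarith))
    refine ⟨?_, ?_, ?_⟩
    · have h3 : |θ τ| - |θ t| ≤ |θ τ - θ t| := abs_sub_abs_le_abs_sub _ _
      linarith
    · have h4 : |α τ - α t| < α t / 2 := lt_of_lt_of_le h2 (min_le_left _ _)
      have h5 := abs_lt.mp h4
      linarith
    · have h4 : |α τ - α t| < 1 := lt_of_lt_of_le h2 (min_le_right _ _)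
      have h5 := abs_lt.mp h4
      linarith
  set lo : ℝ := min s (t - r) with hlodef
  have hK : ∀ τ ∈ Set.Icc lo (t + r), |θ τ| ≤ 3/2 ∧ 0 < α τ ∧ α τ ≤ 3 := by
    rintro τ ⟨h1, h2⟩
    rcases le_or_gt 0 τ with h0 | h0
    · obtain ⟨ha1, ha2⟩ := hα τ h0
      exact ⟨le_trans (hθ τ h0) (hmin_le1 τ h0), ha1, by linarith⟩
    · apply hgood
      have hτl : t - r ≤ τ := by
        by_contra hcon
        push_neg at hcon
        have : τ < lo := lt_min (by linarith) hcon
        linarith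
      rw [abs_le]
      constructor <;> linarith
  -- the dominating function
  set Λ : ℝ → ℝ := fun ξ => Real.log (1 + b * (1 + ξ^2)^2) + 1 + Real.pi with hΛdef
  have hD1 : ∀ ξ : ℝ, (1:ℝ) ≤ 1 + b * (1+ξ^2)^2 := by
    intro ξ
    nlinarith [sq_nonneg ξ, sq_nonneg (1+ξ^2)]
  have hΛ1 : ∀ ξ, 1 ≤ Λ ξ := by
    intro ξ
    have h1 := Real.log_nonneg (hD1 ξ)
    have h2 := Real.pi_pos
    simp only [hΛdef]
    linarith
  have hΛ0 : ∀ ξ, 0 ≤ Λ ξ := fun ξ => le_trans zero_le_one (hΛ1 ξ)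
  set c : ℝ := t - s + r with hcdef
  have hc0 : 0 ≤ c := by simp only [hcdef]; linarith
  have hts' : ∀ t' ∈ Metric.ball t r, |t' - s| ≤ c := by
    intro t' ht'
    have h1 : |t' - t| < r := by
      rw [← Real.dist_eq]; exact Metric.mem_ball.mp ht'
    have h2 := abs_lt.mp h1
    rw [abs_le]
    constructor <;> (simp only [hcdef]; linarith)
  have hLbound : ∀ τ ∈ Set.Icc lo (t + r), ∀ ξ : ℝ,
      ‖Complex.log (1 + (b:ℂ) * feller (α τ) (θ τ) ξ)‖ ≤ Λ ξ := by
    intro τ hτ ξ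
    obtain ⟨h1, h2, h3⟩ := hK τ hτ
    exact (symbol_props hb h2 h3 h1 ξ).2
  have hball_sub : Metric.ball t r ⊆ Set.Icc lo (t + r) := by
    intro τ hτ
    have h1 : |τ - t| < r := by
      rw [← Real.dist_eq]; exact Metric.mem_ball.mp hτ
    have h2 := abs_lt.mp h1
    exact ⟨le_trans (min_le_right s (t-r)) (by linarith), by linarith⟩
  have hs_mem : s ∈ Set.Icc lo (t + r) := ⟨min_le_left _ _, by linarith⟩
  have huIcc : ∀ t' ∈ Metric.ball t r, Set.uIcc s t' ⊆ Set.Icc lo (t + r) := fun t' ht' =>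
    Set.uIcc_subset_Icc hs_mem (hball_sub ht')
  have ht_mem : t ∈ Metric.ball t r := Metric.mem_ball_self hrpos
  -- exp bound
  have hexp_bound : ∀ t' ∈ Metric.ball t r, ∀ ξ : ℝ,
      ‖Complex.exp (-(∫ τ in s..t', Complex.log (1 + (b:ℂ) * feller (α τ) (θ τ) ξ)))‖
        ≤ Real.exp (c * Λ ξ) := by
    intro t' ht' ξ
    have hInt : ‖∫ τ in s..t', Complex.log (1 + (b:ℂ) * feller (α τ) (θ τ) ξ)‖
        ≤ Λ ξ * |t' - s| := by
      apply intervalIntegral.norm_integral_le_of_norm_le_const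
      intro τ hτ
      exact hLbound τ (huIcc t' ht' (Set.Ioc_subset_Icc_self hτ)) ξ
    rw [Complex.norm_exp]
    apply Real.exp_le_exp.mpr
    have h1 : (-(∫ τ in s..t', Complex.log (1 + (b:ℂ) * feller (α τ) (θ τ) ξ))).re
        ≤ ‖∫ τ in s..t', Complex.log (1 + (b:ℂ) * feller (α τ) (θ τ) ξ)‖ := by
      calc (-(∫ τ in s..t', Complex.log (1 + (b:ℂ) * feller (α τ) (θ τ) ξ))).re
          ≤ |(-(∫ τ in s..t', Complex.log (1 + (b:ℂ) * feller (α τ) (θ τ) ξ))).re| :=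
            le_abs_self _
        _ ≤ ‖-(∫ τ in s..t', Complex.log (1 + (b:ℂ) * feller (α τ) (θ τ) ξ))‖ :=
            Complex.abs_re_le_norm _
        _ = ‖∫ τ in s..t', Complex.log (1 + (b:ℂ) * feller (α τ) (θ τ) ξ)‖ := by
            rw [norm_neg]
    have h2 : Λ ξ * |t' - s| ≤ Λ ξ * c := mul_le_mul_of_nonneg_left (hts' t' ht') (hΛ0 ξ)
    calc (-(∫ τ in s..t', Complex.log (1 + (b:ℂ) * feller (α τ) (θ τ) ξ))).re
        ≤ Λ ξ * |t' - s| := le_trans h1 hInt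
      _ ≤ Λ ξ * c := h2
      _ = c * Λ ξ := mul_comm _ _
  -- bound function and its integrability
  set bound : ℝ → ℝ := fun ξ => Λ ξ * Real.exp (c * Λ ξ) * ‖fhat ⇑f ξ‖ with hbounddef
  have hbound0 : ∀ ξ, 0 ≤ bound ξ := by
    intro ξ
    simp only [hbounddef]
    have := hΛ0 ξ
    positivity
  set N : ℕ := ⌈c⌉₊ with hNdef
  have hcN : c ≤ (N : ℝ) := Nat.le_ceil c
  set M : ℕ := 2 * (N + 1) with hMdef
  have hbound_le : ∀ ξ : ℝ, bound ξ ≤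
      ((1 + Real.pi) * Real.exp (c * (1 + Real.pi)) * (1 + b)^(N+1)) *
        ((1 + ξ^2)^M * ‖fhat ⇑f ξ‖) := by
    intro ξ
    set D : ℝ := 1 + b * (1 + ξ^2)^2 with hDdef
    have hD1' : (1:ℝ) ≤ D := hD1 ξ
    have hD0 : (0:ℝ) < D := lt_of_lt_of_le one_pos hD1'
    have hΛD : Λ ξ ≤ (1 + Real.pi) * D := by
      have h1 : Real.log D ≤ D - 1 := Real.log_le_sub_one_of_pos hD0
      have h2 : Real.pi * 1 ≤ Real.pi * D := by
        apply mul_le_mul_of_nonneg_left hD1' Real.pi_pos.le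
      simp only [hΛdef]
      nlinarith
    have hexpΛ : Real.exp (c * Λ ξ) ≤ Real.exp (c * (1 + Real.pi)) * D ^ (N:ℕ) := by
      have h1 : c * Λ ξ = c * Real.log D + c * (1 + Real.pi) := by
        simp only [hΛdef, hDdef]; ring
      rw [h1, Real.exp_add]
      have h2 : Real.exp (c * Real.log D) = D ^ (c:ℝ) := by
        rw [Real.rpow_def_of_pos hD0, mul_comm]
      have h3 : D ^ (c:ℝ) ≤ D ^ ((N:ℕ):ℝ) := Real.rpow_le_rpow_of_exponent_le hD1' hcN
      have h4 : D ^ ((N:ℕ):ℝ) = D ^ (N:ℕ) := Real.rpow_natCast D N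
      have h5 : (0:ℝ) < Real.exp (c * (1 + Real.pi)) := Real.exp_pos _
      calc Real.exp (c * Real.log D) * Real.exp (c * (1 + Real.pi))
          ≤ (D ^ (N:ℕ)) * Real.exp (c * (1 + Real.pi)) := by
            rw [h2]
            apply mul_le_mul_of_nonneg_right (le_trans h3 (le_of_eq h4)) h5.le
        _ = Real.exp (c * (1 + Real.pi)) * D ^ (N:ℕ) := mul_comm _ _
    have hDle : D ≤ (1 + b) * (1 + ξ^2)^2 := by
      simp only [hDdef]
      nlinarith [sq_nonneg ξ, sq_nonneg (1 + ξ^2)]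
    have hDpow : D ^ (N+1) ≤ (1 + b)^(N+1) * (1 + ξ^2)^M := by
      calc D ^ (N+1) ≤ ((1 + b) * (1 + ξ^2)^2) ^ (N+1) := pow_le_pow_left₀ hD0.le hDle (N+1)
        _ = (1 + b)^(N+1) * ((1 + ξ^2)^2)^(N+1) := mul_pow _ _ _
        _ = (1 + b)^(N+1) * (1 + ξ^2)^M := by
            rw [← pow_mul]
    have hfn : (0:ℝ) ≤ ‖fhat ⇑f ξ‖ := norm_nonneg _
    calc bound ξ = Λ ξ * Real.exp (c * Λ ξ) * ‖fhat ⇑f ξ‖ := rfl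
      _ ≤ ((1 + Real.pi) * D) * (Real.exp (c * (1 + Real.pi)) * D ^ (N:ℕ)) * ‖fhat ⇑f ξ‖ := by
          apply mul_le_mul_of_nonneg_right _ hfn
          apply mul_le_mul hΛD hexpΛ (Real.exp_pos _).le
          positivity
      _ = ((1 + Real.pi) * Real.exp (c * (1 + Real.pi))) * (D ^ (N+1)) * ‖fhat ⇑f ξ‖ := by
          rw [pow_succ]
          ring
      _ ≤ ((1 + Real.pi) * Real.exp (c * (1 + Real.pi))) *
            ((1 + b)^(N+1) * (1 + ξ^2)^M) * ‖fhat ⇑f ξ‖ := by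
          apply mul_le_mul_of_nonneg_right _ hfn
          apply mul_le_mul_of_nonneg_left hDpow
          positivity
      _ = ((1 + Real.pi) * Real.exp (c * (1 + Real.pi)) * (1 + b)^(N+1)) *
            ((1 + ξ^2)^M * ‖fhat ⇑f ξ‖) := by ring
  have hΛcont : Continuous Λ := by
    simp only [hΛdef]
    apply Continuous.add (Continuous.add _ continuous_const) continuous_const
    apply Continuous.log
    · exact continuous_const.add (continuous_const.mul
        ((continuous_const.add (continuous_pow 2)).pow 2))
    · intro ξ
      have := hD1 ξ
      linarith
  have hbound_cont : Continuous bound := by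
    simp only [hbounddef]
    exact (hΛcont.mul (Real.continuous_exp.comp (continuous_const.mul hΛcont))).mul
      (fhat_continuous f).norm
  have hbound_int : Integrable bound := by
    apply ((integrable_poly_fhat f M).const_mul
      ((1 + Real.pi) * Real.exp (c * (1 + Real.pi)) * (1 + b)^(N+1))).mono'
      hbound_cont.aestronglyMeasurable
    refine ae_of_all _ fun ξ => ?_
    rw [Real.norm_eq_abs, _root_.abs_of_nonneg (hbound0 ξ)]
    exact hbound_le ξ
  -- measurability of F t' for every t'
  have hF_meas : ∀ t' : ℝ, AEStronglyMeasurable (fun ξ : ℝ =>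
      Complex.exp (Complex.I * ξ * x) *
        (Complex.exp (-(∫ τ in s..t', Complex.log (1 + (b:ℂ) * feller (α τ) (θ τ) ξ))) *
          fhat (⇑f) ξ)) volume := by
    intro t'
    have h1 : Continuous fun ξ : ℝ => Complex.exp (Complex.I * ξ * x) :=
      Complex.continuous_exp.comp
        ((continuous_const.mul Complex.continuous_ofReal).mul continuous_const)
    have h2 : AEStronglyMeasurable (fun ξ : ℝ =>
        Complex.exp (-(∫ τ in s..t', Complex.log (1 + (b:ℂ) * feller (α τ) (θ τ) ξ)))) volume :=
      Complex.continuous_exp.comp_aestronglyMeasurable (aesm_inner hαc hθc b s t').neg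
    exact h1.aestronglyMeasurable.mul (h2.mul (fhat_continuous f).aestronglyMeasurable)
  -- norm identity for the integrand at t'
  have hF_norm : ∀ t' ξ : ℝ, ‖Complex.exp (Complex.I * ξ * x) *
      (Complex.exp (-(∫ τ in s..t', Complex.log (1 + (b:ℂ) * feller (α τ) (θ τ) ξ))) *
        fhat (⇑f) ξ)‖ =
      ‖Complex.exp (-(∫ τ in s..t', Complex.log (1 + (b:ℂ) * feller (α τ) (θ τ) ξ)))‖ *
        ‖fhat (⇑f) ξ‖ := by
    intro t' ξ
    rw [norm_mul, norm_mul]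
    have h1 : ‖Complex.exp (Complex.I * ξ * x)‖ = 1 := by
      rw [Complex.norm_exp]
      have h2 : (Complex.I * ξ * x).re = 0 := by simp
      rw [h2, Real.exp_zero]
    rw [h1, one_mul]
  -- integrability of F t
  have hF_int : Integrable (fun ξ : ℝ => Complex.exp (Complex.I * ξ * x) *
      (Complex.exp (-(∫ τ in s..t, Complex.log (1 + (b:ℂ) * feller (α τ) (θ τ) ξ))) *
        fhat (⇑f) ξ)) := by
    apply hbound_int.mono' (hF_meas t)
    refine ae_of_all _ fun ξ => ?_
    rw [hF_norm t ξ]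
    calc ‖Complex.exp (-(∫ τ in s..t, Complex.log (1 + (b:ℂ) * feller (α τ) (θ τ) ξ)))‖ *
          ‖fhat (⇑f) ξ‖
        ≤ Real.exp (c * Λ ξ) * ‖fhat (⇑f) ξ‖ :=
          mul_le_mul_of_nonneg_right (hexp_bound t ht_mem ξ) (norm_nonneg _)
      _ ≤ Λ ξ * Real.exp (c * Λ ξ) * ‖fhat (⇑f) ξ‖ := by
          have h1 := hΛ1 ξ
          have h2 : (0:ℝ) < Real.exp (c * Λ ξ) := Real.exp_pos _
          nlinarith [mul_nonneg (mul_nonneg (sub_nonneg.mpr h1) h2.le)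
            (norm_nonneg (fhat (⇑f) ξ))]
      _ = bound ξ := rfl
  -- measurability of F' t
  have hF'_meas : AEStronglyMeasurable (fun ξ : ℝ => Complex.exp (Complex.I * ξ * x) *
      ((-Complex.log (1 + (b:ℂ) * feller (α t) (θ t) ξ)) *
        (Complex.exp (-(∫ τ in s..t, Complex.log (1 + (b:ℂ) * feller (α τ) (θ τ) ξ))) *
          fhat (⇑f) ξ))) volume := by
    have h1 : Continuous fun ξ : ℝ => Complex.exp (Complex.I * ξ * x) :=
      Complex.continuous_exp.comp
        ((continuous_const.mul Complex.continuous_ofReal).mul continuous_const)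
    have h2 : AEStronglyMeasurable (fun ξ : ℝ =>
        Complex.exp (-(∫ τ in s..t, Complex.log (1 + (b:ℂ) * feller (α τ) (θ τ) ξ)))) volume :=
      Complex.continuous_exp.comp_aestronglyMeasurable (aesm_inner hαc hθc b s t).neg
    exact h1.aestronglyMeasurable.mul ((aesm_Lt hαc hθc b t).neg.mul
      (h2.mul (fhat_continuous f).aestronglyMeasurable))
  -- the bound on F'
  have h_bound : ∀ᵐ ξ : ℝ, ∀ t' ∈ Metric.ball t r,
      ‖Complex.exp (Complex.I * ξ * x) *
        ((-Complex.log (1 + (b:ℂ) * feller (α t') (θ t') ξ)) *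
          (Complex.exp (-(∫ τ in s..t', Complex.log (1 + (b:ℂ) * feller (α τ) (θ τ) ξ))) *
            fhat (⇑f) ξ))‖ ≤ bound ξ := by
    refine ae_of_all _ fun ξ t' ht' => ?_
    have h1 : ‖Complex.exp (Complex.I * ξ * x)‖ = 1 := by
      rw [Complex.norm_exp]
      have h2 : (Complex.I * ξ * x).re = 0 := by simp
      rw [h2, Real.exp_zero]
    rw [norm_mul, norm_mul, norm_mul, h1, one_mul, norm_neg]
    have h2 : ‖Complex.log (1 + (b:ℂ) * feller (α t') (θ t') ξ)‖ ≤ Λ ξ :=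
      hLbound t' (hball_sub ht') ξ
    have h3 := hexp_bound t' ht' ξ
    calc ‖Complex.log (1 + (b:ℂ) * feller (α t') (θ t') ξ)‖ *
          (‖Complex.exp (-(∫ τ in s..t', Complex.log (1 + (b:ℂ) * feller (α τ) (θ τ) ξ)))‖ *
            ‖fhat (⇑f) ξ‖)
        ≤ Λ ξ * (Real.exp (c * Λ ξ) * ‖fhat (⇑f) ξ‖) := by
          apply mul_le_mul h2 (mul_le_mul_of_nonneg_right h3 (norm_nonneg _))
            (by positivity) (hΛ0 ξ)
      _ = bound ξ := by simp only [hbounddef]; ring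
  -- differentiability in t' for a.e. ξ
  have h_diff : ∀ᵐ ξ : ℝ, ∀ t' ∈ Metric.ball t r,
      HasDerivAt (fun w : ℝ => Complex.exp (Complex.I * ξ * x) *
          (Complex.exp (-(∫ τ in s..w, Complex.log (1 + (b:ℂ) * feller (α τ) (θ τ) ξ))) *
            fhat (⇑f) ξ))
        (Complex.exp (Complex.I * ξ * x) *
          ((-Complex.log (1 + (b:ℂ) * feller (α t') (θ t') ξ)) *
            (Complex.exp (-(∫ τ in s..t', Complex.log (1 + (b:ℂ) * feller (α τ) (θ τ) ξ))) *
              fhat (⇑f) ξ))) t' := by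
    filter_upwards [ae_ne_zero] with ξ hξ
    intro t' ht'
    have hzc : Continuous fun τ => 1 + (b:ℂ) * feller (α τ) (θ τ) ξ := cont_z hαc hθc b hξ
    have hslit : ∀ τ ∈ Set.Icc lo (t + r),
        (1 + (b:ℂ) * feller (α τ) (θ τ) ξ) ∈ Complex.slitPlane := by
      intro τ hτ
      obtain ⟨h1, h2, h3⟩ := hK τ hτ
      exact (symbol_props hb h2 h3 h1 ξ).1
    have hLcont : ContinuousOn (fun τ => Complex.log (1 + (b:ℂ) * feller (α τ) (θ τ) ξ))
        (Set.Icc lo (t + r)) := ContinuousOn.clog hzc.continuousOn hslit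
    have hint : IntervalIntegrable (fun τ => Complex.log (1 + (b:ℂ) * feller (α τ) (θ τ) ξ))
        volume s t' := (hLcont.mono (huIcc t' ht')).intervalIntegrable
    have hmeasAt : StronglyMeasurableAtFilter
        (fun τ => Complex.log (1 + (b:ℂ) * feller (α τ) (θ τ) ξ)) (𝓝 t') volume :=
      ContinuousOn.stronglyMeasurableAtFilter Metric.isOpen_ball (hLcont.mono hball_sub) t' ht'
    have hcAt : ContinuousAt (fun τ => Complex.log (1 + (b:ℂ) * feller (α τ) (θ τ) ξ)) t' :=
      ContinuousAt.clog hzc.continuousAt (hslit t' (hball_sub ht'))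
    have hFTC := intervalIntegral.integral_hasDerivAt_right hint hmeasAt hcAt
    have h2 : HasDerivAt (fun w : ℝ =>
        Complex.exp (-(∫ τ in s..w, Complex.log (1 + (b:ℂ) * feller (α τ) (θ τ) ξ))))
        (Complex.exp (-(∫ τ in s..t', Complex.log (1 + (b:ℂ) * feller (α τ) (θ τ) ξ))) *
          (-Complex.log (1 + (b:ℂ) * feller (α t') (θ t') ξ))) t' := hFTC.neg.cexp
    have h3 := (h2.mul_const (fhat (⇑f) ξ)).const_mul (Complex.exp (Complex.I * ξ * x))
    refine h3.congr_deriv ?_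
    ring
  have key := hasDerivAt_integral_of_dominated_loc_of_deriv_le (Metric.ball_mem_nhds t hrpos)
    (Filter.Eventually.of_forall hF_meas) hF_int hF'_meas h_bound hbound_int h_diff
  exact key.2

end Stmt9Aux

theorem stmt9
    (α θ : ℝ → ℝ) (hαc : Continuous α) (hθc : Continuous θ)
    (hα : ∀ t : ℝ, 0 ≤ t → α t ∈ Set.Ioc (0 : ℝ) 2)
    (hθ : ∀ t : ℝ, 0 ≤ t → |θ t| ≤ min (α t) (2 - α t))
    (b : ℝ) (hb : 0 < b) (s : ℝ) (hs : 0 ≤ s) (f : SchwartzMap ℝ ℂ)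
    (u : ℝ → ℝ → ℂ)
    (hu : ∀ x t : ℝ, u x t = (Real.sqrt (2 * Real.pi))⁻¹ *
      ∫ ξ : ℝ, Complex.exp (Complex.I * ξ * x) *
        (Complex.exp (-(∫ τ in s..t,
            Complex.log (1 + (b : ℂ) * feller (α τ) (θ τ) ξ))) * fhat (⇑f) ξ)) :
    (∀ x : ℝ, u x s = f x) ∧
    (∀ x t : ℝ, s ≤ t →
      HasDerivAt (fun t' : ℝ => u x t')
        ((Real.sqrt (2 * Real.pi))⁻¹ *
          ∫ ξ : ℝ, Complex.exp (Complex.I * ξ * x) *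
            ((-Complex.log (1 + (b : ℂ) * feller (α t) (θ t) ξ)) *
              (Complex.exp (-(∫ τ in s..t,
                  Complex.log (1 + (b : ℂ) * feller (α τ) (θ τ) ξ))) * fhat (⇑f) ξ)))
        t) := by
  constructor
  · intro x
    rw [hu x s]
    simp only [intervalIntegral.integral_same, neg_zero, Complex.exp_zero, one_mul]
    exact Stmt9Aux.part1 f x
  · intro x t hst
    have h := Stmt9Aux.part2 α θ hαc hθc hα hθ b hb s hs f x t hst
    have hfun : (fun t' : ℝ => u x t') = fun t' : ℝ => (Real.sqrt (2 * Real.pi))⁻¹ *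
        ∫ ξ : ℝ, Complex.exp (Complex.I * ξ * x) *
          (Complex.exp (-(∫ τ in s..t',
              Complex.log (1 + (b : ℂ) * feller (α τ) (θ τ) ξ))) * fhat (⇑f) ξ) :=
      funext fun t' => hu x t'
    rw [hfun]
    exact h.const_mul _
end

section
/- Let t > 0, b > 0 and let α : [0,t] → (0,1) be continuous. Then, as η → 0⁺, 1 − exp( −∫_0^t ln(1 + b η^{α(s)}) ds ) is asymptotically equivalent to b ∫_0^t η^{α(s)} ds; that is, lim_{η→0⁺} [ 1 − exp( −∫_0^t ln(1 + b η^{α(s)}) ds ) ] / [ b ∫_0^t η^{α(s)} ds ] = 1. -/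
open MeasureTheory Real Filter

private lemma aux_log_lb {u : ℝ} (hu : 0 ≤ u) : u - u ^ 2 ≤ Real.log (1 + u) := by
  have h1 : (0:ℝ) < 1 + u := by linarith
  have h := Real.log_le_sub_one_of_pos (inv_pos.mpr h1)
  rw [Real.log_inv] at h
  have hinv : (1 + u) * (1 + u)⁻¹ = 1 := mul_inv_cancel₀ h1.ne'
  have hinvn : 0 ≤ (1 + u)⁻¹ := inv_nonneg.mpr h1.le
  nlinarith [mul_nonneg (mul_nonneg hu hu) hu]

private lemma aux_exp_lb {I : ℝ} (hI : 0 ≤ I) : I - I ^ 2 ≤ 1 - Real.exp (-I) := by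
  have h := Real.add_one_le_exp I
  have hE : 0 < Real.exp I := Real.exp_pos I
  rw [Real.exp_neg]
  have hinv : Real.exp I * (Real.exp I)⁻¹ = 1 := mul_inv_cancel₀ hE.ne'
  have hinvn : 0 ≤ (Real.exp I)⁻¹ := inv_nonneg.mpr hE.le
  nlinarith [mul_nonneg (mul_nonneg hI hI) hI, sq_nonneg I]

theorem stmt12 (t b : ℝ) (ht : 0 < t) (hb : 0 < b)
    (α : ℝ → ℝ) (hαc : ContinuousOn α (Set.Icc 0 t))
    (hα : ∀ s ∈ Set.Icc (0 : ℝ) t, α s ∈ Set.Ioo (0 : ℝ) 1) :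
    Tendsto (fun η : ℝ =>
      (1 - Real.exp (-(∫ s in (0 : ℝ)..t, Real.log (1 + b * η ^ (α s))))) /
        (b * ∫ s in (0 : ℝ)..t, η ^ (α s)))
      (nhdsWithin 0 (Set.Ioi 0)) (nhds 1) := by
  obtain ⟨s₀, hs₀, hmin⟩ := isCompact_Icc.exists_isMinOn
    (Set.nonempty_Icc.mpr ht.le) hαc
  set m : ℝ := α s₀ with hmdef
  have hm : 0 < m := (hα s₀ hs₀).1
  have hmle : ∀ s ∈ Set.Icc (0:ℝ) t, m ≤ α s := fun s hs => hmin hs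
  -- key facts for η ∈ (0,1)
  have key : ∀ η ∈ Set.Ioo (0:ℝ) 1,
      0 < (∫ s in (0:ℝ)..t, η ^ (α s)) ∧
      (∫ s in (0:ℝ)..t, η ^ (α s)) ≤ t * η ^ m ∧
      (b - b ^ 2 * η ^ m) * (∫ s in (0:ℝ)..t, η ^ (α s)) ≤
        (∫ s in (0:ℝ)..t, Real.log (1 + b * η ^ (α s))) ∧
      (∫ s in (0:ℝ)..t, Real.log (1 + b * η ^ (α s))) ≤
        b * (∫ s in (0:ℝ)..t, η ^ (α s)) ∧
      0 ≤ (∫ s in (0:ℝ)..t, Real.log (1 + b * η ^ (α s))) := by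
    intro η hη
    have hη0 : 0 < η := hη.1
    have hη1 : η ≤ 1 := hη.2.le
    have hxpos : ∀ s, 0 < η ^ (α s) := fun s => Real.rpow_pos_of_pos hη0 _
    have hxc : ContinuousOn (fun s => η ^ (α s)) (Set.Icc 0 t) :=
      ContinuousOn.rpow continuousOn_const hαc (fun s _ => Or.inl hη0.ne')
    have hxint : IntervalIntegrable (fun s => η ^ (α s)) volume 0 t := by
      apply ContinuousOn.intervalIntegrable
      rwa [Set.uIcc_of_le ht.le]
    have hlc : ContinuousOn (fun s => Real.log (1 + b * η ^ (α s))) (Set.Icc 0 t) := by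
      apply ContinuousOn.log
      · exact continuousOn_const.add (continuousOn_const.mul hxc)
      · intro s _
        have := hxpos s
        positivity
    have hlint : IntervalIntegrable (fun s => Real.log (1 + b * η ^ (α s))) volume 0 t := by
      apply ContinuousOn.intervalIntegrable
      rwa [Set.uIcc_of_le ht.le]
    have hJpos : 0 < ∫ s in (0:ℝ)..t, η ^ (α s) :=
      intervalIntegral.intervalIntegral_pos_of_pos_on hxint (fun s _ => hxpos s) ht
    have hxm : ∀ s ∈ Set.Icc (0:ℝ) t, η ^ (α s) ≤ η ^ m := fun s hs =>
      Real.rpow_le_rpow_of_exponent_ge hη0 hη1 (hmle s hs)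
    have hJle : (∫ s in (0:ℝ)..t, η ^ (α s)) ≤ t * η ^ m := by
      have := intervalIntegral.integral_mono_on ht.le hxint
        (intervalIntegrable_const (c := η ^ m)) hxm
      simpa using this
    refine ⟨hJpos, hJle, ?_, ?_, ?_⟩
    · have hmono := intervalIntegral.integral_mono_on ht.le
        (hxint.const_mul (b - b ^ 2 * η ^ m)) hlint
        (fun s hs => ?_)
      · rwa [intervalIntegral.integral_const_mul] at hmono
      · have hu : 0 ≤ b * η ^ (α s) := by positivity
        have h1 := aux_log_lb hu
        have h2 : (b * η ^ (α s)) ^ 2 ≤ b ^ 2 * η ^ m * η ^ (α s) := by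
          have := hxm s hs
          nlinarith [hxpos s, hb.le]
        nlinarith
    · have hmono := intervalIntegral.integral_mono_on ht.le hlint
        (hxint.const_mul b) (fun s hs => ?_)
      · rwa [intervalIntegral.integral_const_mul] at hmono
      · have := Real.log_le_sub_one_of_pos (show (0:ℝ) < 1 + b * η ^ (α s) by
          have := hxpos s; positivity)
        linarith
    · refine intervalIntegral.integral_nonneg ht.le (fun s _ => ?_)
      apply Real.log_nonneg
      have := hxpos s
      nlinarith [hb.le]
  -- squeeze
  have hηm0 : Tendsto (fun η : ℝ => η ^ m) (nhdsWithin 0 (Set.Ioi 0)) (nhds 0) := by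
    have h := (Real.continuousAt_rpow_const 0 m (Or.inr hm.le)).tendsto
    rw [Real.zero_rpow hm.ne'] at h
    exact h.mono_left nhdsWithin_le_nhds
  have hg : Tendsto (fun η : ℝ => 1 - (b + b * t) * η ^ m)
      (nhdsWithin 0 (Set.Ioi 0)) (nhds 1) := by
    have := tendsto_const_nhds (x := (1:ℝ)) (f := nhdsWithin (0:ℝ) (Set.Ioi 0))
      |>.sub (hηm0.const_mul (b + b * t))
    simpa using this
  have hmem : Set.Ioo (0:ℝ) 1 ∈ nhdsWithin (0:ℝ) (Set.Ioi 0) :=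
    Ioo_mem_nhdsGT_of_mem (by constructor <;> norm_num)
  refine tendsto_of_tendsto_of_tendsto_of_le_of_le' hg tendsto_const_nhds ?_ ?_
  · filter_upwards [hmem] with η hη
    obtain ⟨hJpos, hJle, hIl, hIu, hI0⟩ := key η hη
    set J := ∫ s in (0:ℝ)..t, η ^ (α s)
    set I := ∫ s in (0:ℝ)..t, Real.log (1 + b * η ^ (α s))
    have hbJ : 0 < b * J := mul_pos hb hJpos
    rw [le_div_iff₀ hbJ]
    have h1 := aux_exp_lb hI0
    have hI2 : I * I ≤ (b * J) * (b * J) := mul_self_le_mul_self hI0 hIu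
    have hηm : 0 < η ^ m := Real.rpow_pos_of_pos hη.1 _
    nlinarith [mul_nonneg (mul_nonneg (mul_nonneg hb.le hb.le) hJpos.le)
      (sub_nonneg.mpr hJle)]
  · filter_upwards [hmem] with η hη
    obtain ⟨hJpos, hJle, hIl, hIu, hI0⟩ := key η hη
    set J := ∫ s in (0:ℝ)..t, η ^ (α s)
    set I := ∫ s in (0:ℝ)..t, Real.log (1 + b * η ^ (α s))
    have hbJ : 0 < b * J := mul_pos hb hJpos
    rw [div_le_one hbJ]
    have := Real.add_one_le_exp (-I)
    linarith
end

section
/- Let b : [0,∞) → (0,∞) be continuous, s ≥ 0 and f ∈ 𝒮(ℝ). For t ≥ s and x ∈ ℝ define u(x,t) = (2π)^{-1/2} ∫_ℝ e^{iξx} exp( −∫_s^t Log(1 − i b(τ) ξ) dτ ) f̂(ξ) dξ. Then u(x,s) = f(x) for all x, and for every x and t ≥ s the function t ↦ u(x,t) is differentiable with ∂_t u(x,t) = (2π)^{-1/2} ∫_ℝ e^{iξx} ( −Log(1 − i b(t) ξ) ) exp( −∫_s^t Log(1 − i b(τ) ξ) dτ ) f̂(ξ) dξ; that is, u solves ∂_t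 u = −ln(1 − b(t) ∂_x) u, u(·,s) = f, where −ln(1 − b(t)∂_x) is the Fourier-multiplier operator with symbol −Log(1 − i b(t) ξ). -/
open MeasureTheory Complex Real Filter
open scoped FourierTransform

namespace Stmt13Aux

lemma re_aux (c ξ : ℝ) : (1 - Complex.I * (c : ℂ) * (ξ : ℂ)).re = 1 := by simp

lemma one_le_abs_aux (c ξ : ℝ) : 1 ≤ ‖(1 - Complex.I * (c : ℂ) * (ξ : ℂ))‖ := by
  calc (1 : ℝ) = |(1 - Complex.I * (c : ℂ) * (ξ : ℂ)).re| := by rw [re_aux]; norm_num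
    _ ≤ ‖(1 - Complex.I * (c : ℂ) * (ξ : ℂ))‖ := Complex.abs_re_le_norm _
    _ = ‖(1 - Complex.I * (c : ℂ) * (ξ : ℂ))‖ := rfl

lemma abs_le_aux {B : ℝ} {c : ℝ} (ξ : ℝ) (hc : ‖c‖ ≤ B) :
    ‖(1 - Complex.I * (c : ℂ) * (ξ : ℂ))‖ ≤ 1 + B * ‖ξ‖ := by
  have h0 : (0:ℝ) ≤ ‖ξ‖ := norm_nonneg _
  calc ‖(1 - Complex.I * (c : ℂ) * (ξ : ℂ))‖ ≤ ‖(1 : ℂ)‖ + ‖Complex.I * (c : ℂ) * (ξ : ℂ)‖ :=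
        norm_sub_le _ _
    _ = 1 + ‖c‖ * ‖ξ‖ := by
        simp [norm_mul]
    _ ≤ 1 + B * ‖ξ‖ := by nlinarith

lemma mem_aux (c ξ : ℝ) : (1 - Complex.I * (c : ℂ) * (ξ : ℂ)) ∈ Complex.slitPlane := by
  left
  rw [re_aux]
  norm_num

lemma contL {b : ℝ → ℝ} (hb : Continuous b) :
    Continuous fun p : ℝ × ℝ => Complex.log (1 - Complex.I * (b p.1 : ℂ) * (p.2 : ℂ)) := by
  have hin : Continuous fun p : ℝ × ℝ => 1 - Complex.I * (b p.1 : ℂ) * (p.2 : ℂ) := by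
    fun_prop
  exact hin.clog fun p => mem_aux (b p.1) p.2

lemma norm_log_le {B c : ℝ} (ξ : ℝ) (hc : ‖c‖ ≤ B) :
    ‖Complex.log (1 - Complex.I * (c : ℂ) * (ξ : ℂ))‖ ≤ Real.pi + B * ‖ξ‖ := by
  set z : ℂ := 1 - Complex.I * (c : ℂ) * (ξ : ℂ) with hz
  have h1 : 1 ≤ ‖z‖ := one_le_abs_aux c ξ
  have h2 : ‖z‖ ≤ 1 + B * ‖ξ‖ := abs_le_aux ξ hc
  have hB : 0 ≤ B * ‖ξ‖ := by
    have : 0 ≤ B := le_trans (norm_nonneg c) hc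
    positivity
  have habs : ‖z‖ = ‖z‖ := rfl
  calc ‖Complex.log z‖ = ‖Complex.log z‖ := rfl
    _ ≤ |(Complex.log z).re| + |(Complex.log z).im| := Complex.norm_le_abs_re_add_abs_im _
    _ ≤ B * ‖ξ‖ + Real.pi := by
        gcongr
        · rw [Complex.log_re, _root_.abs_of_nonneg (Real.log_nonneg (by rw [habs]; exact h1))]
          calc Real.log ‖z‖ ≤ Real.log (1 + B * ‖ξ‖) := by
                apply Real.log_le_log (by rw [habs]; linarith) (by rw [habs]; exact h2)
            _ ≤ (1 + B * ‖ξ‖) - 1 := Real.log_le_sub_one_of_pos (by linarith)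
            _ = B * ‖ξ‖ := by ring
        · rw [Complex.log_im]
          exact Complex.abs_arg_le_pi _
    _ = Real.pi + B * ‖ξ‖ := by ring

lemma re_log_nonneg (c ξ : ℝ) : 0 ≤ (Complex.log (1 - Complex.I * (c : ℂ) * (ξ : ℂ))).re := by
  rw [Complex.log_re]
  apply Real.log_nonneg
  exact one_le_abs_aux c ξ

lemma re_log_le {B c : ℝ} (ξ : ℝ) (hc : ‖c‖ ≤ B) :
    (Complex.log (1 - Complex.I * (c : ℂ) * (ξ : ℂ))).re ≤ Real.log (1 + B * ‖ξ‖) := by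
  rw [Complex.log_re]
  apply Real.log_le_log
  · linarith [one_le_abs_aux c ξ]
  · exact abs_le_aux ξ hc

lemma intervalIntegral_re {g : ℝ → ℂ} {a b : ℝ} (hg : IntervalIntegrable g volume a b) :
    (∫ τ in a..b, g τ).re = ∫ τ in a..b, (g τ).re := by
  have := Complex.reCLM.intervalIntegral_comp_comm hg
  simpa using this.symm

lemma fhat_eq (f : ℝ → ℂ) (ξ : ℝ) :
    fhat f ξ = ((Real.sqrt (2 * Real.pi))⁻¹ : ℝ) * 𝓕 f (ξ / (2 * Real.pi)) := by
  rw [fhat, Real.fourier_real_eq_integral_exp_smul]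
  congr 1
  refine MeasureTheory.integral_congr_ae (Eventually.of_forall fun v => ?_)
  simp only [smul_eq_mul]
  congr 1
  have hπ : Real.pi ≠ 0 := Real.pi_ne_zero
  have : (-2 * Real.pi * v * (ξ / (2 * Real.pi)) : ℝ) = -(ξ * v) := by field_simp
  rw [this]
  push_cast
  ring

lemma fhat_cont (f : SchwartzMap ℝ ℂ) : Continuous (fhat ⇑f) := by
  have : fhat ⇑f = fun ξ => ((Real.sqrt (2 * Real.pi))⁻¹ : ℝ) *
      (SchwartzMap.fourierTransformCLM ℂ f) (ξ / (2 * Real.pi)) := by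
    funext ξ; rw [fhat_eq]; rfl
  rw [this]
  exact continuous_const.mul ((SchwartzMap.fourierTransformCLM ℂ f).continuous.comp (by fun_prop))

lemma integrable_pow_fhat (f : SchwartzMap ℝ ℂ) (k : ℕ) :
    Integrable (fun ξ : ℝ => ‖ξ‖ ^ k * ‖fhat (⇑f) ξ‖) := by
  set g := SchwartzMap.fourierTransformCLM ℂ f with hg
  have h : Integrable (fun η : ℝ =>
      (Real.sqrt (2 * Real.pi))⁻¹ * ((2 * Real.pi) ^ k * (‖η‖ ^ k * ‖g η‖))) :=
    ((g.integrable_pow_mul volume k).const_mul _).const_mul _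
  have h2 := h.comp_div (R := 2 * Real.pi) (by positivity)
  refine h2.congr (Eventually.of_forall fun ξ => ?_)
  simp only
  have hπ : (0:ℝ) < 2 * Real.pi := by positivity
  have h3 : ‖fhat ⇑f ξ‖ = (Real.sqrt (2 * Real.pi))⁻¹ * ‖g (ξ / (2 * Real.pi))‖ := by
    rw [fhat_eq, norm_mul, Complex.norm_real, Real.norm_eq_abs,
      _root_.abs_of_nonneg (by positivity : (0:ℝ) ≤ (Real.sqrt (2 * Real.pi))⁻¹)]
    rfl
  rw [h3]
  have hnd : ‖ξ / (2 * Real.pi)‖ = ‖ξ‖ / (2 * Real.pi) := by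
    rw [Real.norm_eq_abs, Real.norm_eq_abs, abs_div, _root_.abs_of_pos hπ]
  rw [hnd, div_pow]
  have hne : (2 * Real.pi) ^ k ≠ 0 := by positivity
  field_simp

lemma cont_int_aux {b : ℝ → ℝ} (hb : Continuous b) (s t' : ℝ) :
    Continuous fun ξ : ℝ => ∫ τ in s..t', Complex.log (1 - Complex.I * (b τ : ℂ) * ξ) := by
  have h : Continuous
      (Function.uncurry fun (ξ τ : ℝ) => Complex.log (1 - Complex.I * (b τ : ℂ) * ξ)) := by
    have h2 := (contL hb).comp (continuous_swap : Continuous (Prod.swap : ℝ × ℝ → ℝ × ℝ))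
    exact h2
  exact intervalIntegral.continuous_parametric_intervalIntegral_of_continuous' h s t'

end Stmt13Aux

open Stmt13Aux

set_option maxHeartbeats 1000000 in
theorem stmt13
    (b : ℝ → ℝ) (hbc : Continuous b) (hbpos : ∀ t : ℝ, 0 ≤ t → 0 < b t)
    (s : ℝ) (hs : 0 ≤ s) (f : SchwartzMap ℝ ℂ)
    (u : ℝ → ℝ → ℂ)
    (hu : ∀ x t : ℝ, u x t = (Real.sqrt (2 * Real.pi))⁻¹ *
      ∫ ξ : ℝ, Complex.exp (Complex.I * ξ * x) *
        (Complex.exp (-(∫ τ in s..t,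
            Complex.log (1 - Complex.I * (b τ : ℂ) * ξ))) * fhat (⇑f) ξ)) :
    (∀ x : ℝ, u x s = f x) ∧
    (∀ x t : ℝ, s ≤ t →
      HasDerivAt (fun t' : ℝ => u x t')
        ((Real.sqrt (2 * Real.pi))⁻¹ *
          ∫ ξ : ℝ, Complex.exp (Complex.I * ξ * x) *
            ((-Complex.log (1 - Complex.I * (b t : ℂ) * ξ)) *
              (Complex.exp (-(∫ τ in s..t,
                  Complex.log (1 - Complex.I * (b τ : ℂ) * ξ))) * fhat (⇑f) ξ)))
        t) := by
  constructor
  · -- initial condition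
    intro x
    rw [hu x s]
    simp only [intervalIntegral.integral_same, neg_zero, Complex.exp_zero, one_mul]
    set g : ℝ → ℂ := 𝓕 ⇑f with hgdef
    have hgi : Integrable g := (SchwartzMap.fourierTransformCLM ℂ f).integrable
    have h1 : (∫ ξ : ℝ, Complex.exp (Complex.I * ξ * x) * fhat ⇑f ξ)
        = ∫ ξ : ℝ, (((Real.sqrt (2 * Real.pi))⁻¹ : ℝ) : ℂ) *
            (fun η : ℝ => Complex.exp (Complex.I * (2 * Real.pi * η) * x) * g η)
              (ξ / (2 * Real.pi)) := by
      refine MeasureTheory.integral_congr_ae (Eventually.of_forall fun ξ => ?_)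
      simp only
      rw [fhat_eq]
      have hπc : (Real.pi : ℂ) ≠ 0 := Complex.ofReal_ne_zero.mpr Real.pi_ne_zero
      have hξc : 2 * (Real.pi : ℂ) * ((ξ / (2 * Real.pi) : ℝ) : ℂ) = (ξ : ℂ) := by
        push_cast
        field_simp
      rw [hξc]
      ring
    rw [h1, MeasureTheory.integral_const_mul,
      MeasureTheory.Measure.integral_comp_div
        (fun η : ℝ => Complex.exp (Complex.I * (2 * Real.pi * η) * x) * g η) (2 * Real.pi)]
    have h2 : (∫ η : ℝ, Complex.exp (Complex.I * (2 * Real.pi * η) * x) * g η) = 𝓕⁻ g x := by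
      rw [Real.fourierInv_eq']
      refine MeasureTheory.integral_congr_ae (Eventually.of_forall fun η => ?_)
      simp only [smul_eq_mul]
      congr 1
      have : (inner ℝ η x : ℝ) = η * x := by simp only [RCLike.inner_apply, conj_trivial, mul_comm]
      rw [this]
      push_cast
      ring
    rw [h2]
    have h3 : 𝓕⁻ g x = f x := by
      rw [hgdef]
      exact congrFun (Continuous.fourierInv_fourier_eq f.continuous f.integrable hgi) x
    rw [h3]
    rw [abs_of_pos (by positivity : (0:ℝ) < 2 * Real.pi), Complex.real_smul]
    have hr : ((Real.sqrt (2 * Real.pi))⁻¹ * ((Real.sqrt (2 * Real.pi))⁻¹ * (2 * Real.pi)) : ℝ)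
        = 1 := by
      have hsq : Real.sqrt (2 * Real.pi) * Real.sqrt (2 * Real.pi) = 2 * Real.pi :=
        Real.mul_self_sqrt (by positivity)
      calc (Real.sqrt (2 * Real.pi))⁻¹ * ((Real.sqrt (2 * Real.pi))⁻¹ * (2 * Real.pi))
          = (2 * Real.pi) / (Real.sqrt (2 * Real.pi) * Real.sqrt (2 * Real.pi)) := by ring
        _ = (2 * Real.pi) / (2 * Real.pi) := by rw [hsq]
        _ = 1 := div_self (by positivity)
    calc (((Real.sqrt (2 * Real.pi))⁻¹ : ℝ) : ℂ) * ((((Real.sqrt (2 * Real.pi))⁻¹ : ℝ) : ℂ) *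
          (((2 * Real.pi : ℝ) : ℂ) * (f x : ℂ)))
        = (((Real.sqrt (2 * Real.pi))⁻¹ * ((Real.sqrt (2 * Real.pi))⁻¹ * (2 * Real.pi)) : ℝ) : ℂ)
            * (f x) := by push_cast; ring
      _ = f x := by rw [hr]; simp
  · -- the PDE
    intro x t hst
    obtain ⟨B, hB⟩ : ∃ B, ∀ τ ∈ Set.Icc (s - 1) (t + 1), ‖b τ‖ ≤ B :=
      isCompact_Icc.exists_bound_of_continuousOn hbc.continuousOn
    have hsK : s ∈ Set.Icc (s - 1) (t + 1) := ⟨by linarith, by linarith⟩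
    have hB0 : 0 ≤ B := le_trans (norm_nonneg _) (hB s hsK)
    set F : ℝ → ℝ → ℂ := fun t' ξ => Complex.exp (Complex.I * ξ * x) *
      (Complex.exp (-(∫ τ in s..t', Complex.log (1 - Complex.I * (b τ : ℂ) * ξ))) *
        fhat (⇑f) ξ) with hF
    set F' : ℝ → ℝ → ℂ := fun t' ξ => Complex.exp (Complex.I * ξ * x) *
      ((-Complex.log (1 - Complex.I * (b t' : ℂ) * ξ)) *
        (Complex.exp (-(∫ τ in s..t', Complex.log (1 - Complex.I * (b τ : ℂ) * ξ))) *
          fhat (⇑f) ξ)) with hF'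
    set bound : ℝ → ℝ := fun ξ => (Real.pi + B * ‖ξ‖) * ((1 + B * ‖ξ‖) * ‖fhat (⇑f) ξ‖)
      with hbound
    have hc_tau : ∀ ξ : ℝ, Continuous fun τ => Complex.log (1 - Complex.I * (b τ : ℂ) * ξ) :=
      fun ξ => Continuous.clog (by fun_prop) fun τ => mem_aux (b τ) ξ
    have hcont_int : ∀ t' : ℝ,
        Continuous fun ξ : ℝ => ∫ τ in s..t', Complex.log (1 - Complex.I * (b τ : ℂ) * ξ) :=
      fun t' => cont_int_aux hbc s t'
    have hFcont : ∀ t' : ℝ, Continuous (F t') := by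
      intro t'
      apply Continuous.mul
      · exact Complex.continuous_exp.comp (by fun_prop)
      · exact (Complex.continuous_exp.comp (hcont_int t').neg).mul (fhat_cont f)
    have hF'cont : Continuous (F' t) := by
      apply Continuous.mul
      · exact Complex.continuous_exp.comp (by fun_prop)
      · apply Continuous.mul
        · exact (Continuous.clog (by fun_prop) fun ξ => mem_aux (b t) ξ).neg
        · exact (Complex.continuous_exp.comp (hcont_int t).neg).mul (fhat_cont f)
    have hnorm_exp_Ix : ∀ ξ : ℝ, ‖Complex.exp (Complex.I * (ξ : ℂ) * (x : ℂ))‖ = 1 := by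
      intro ξ
      rw [Complex.norm_exp]
      norm_num [Complex.mul_re]
    have hexp_bound : ∀ t' ∈ Metric.ball t 1, ∀ ξ : ℝ,
        ‖Complex.exp (-(∫ τ in s..t', Complex.log (1 - Complex.I * (b τ : ℂ) * ξ)))‖
          ≤ 1 + B * ‖ξ‖ := by
      intro t' ht' ξ
      have hball : t - 1 < t' ∧ t' < t + 1 := by
        rw [Metric.mem_ball, Real.dist_eq, abs_lt] at ht'
        constructor <;> linarith [ht'.1, ht'.2]
      have hBξ : 0 ≤ B * ‖ξ‖ := by positivity
      have hIi : ∀ a b' : ℝ,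
          IntervalIntegrable (fun τ => Complex.log (1 - Complex.I * (b τ : ℂ) * ξ))
            volume a b' := fun a b' => (hc_tau ξ).intervalIntegrable a b'
      rw [Complex.norm_exp, Complex.neg_re,
        intervalIntegral_re (hIi s t')]
      rcases le_or_gt s t' with h | h
      · have hnn : 0 ≤ ∫ τ in s..t', (Complex.log (1 - Complex.I * (b τ : ℂ) * ξ)).re :=
          intervalIntegral.integral_nonneg h (fun τ _ => re_log_nonneg (b τ) ξ)
        calc Real.exp (-(∫ τ in s..t', (Complex.log (1 - Complex.I * (b τ : ℂ) * ξ)).re))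
            ≤ Real.exp 0 := Real.exp_le_exp.mpr (by linarith)
          _ = 1 := Real.exp_zero
          _ ≤ 1 + B * ‖ξ‖ := by linarith
      · have hL0 : 0 ≤ Real.log (1 + B * ‖ξ‖) := Real.log_nonneg (by linarith)
        have hIre : ∀ a b' : ℝ, IntervalIntegrable
            (fun τ => (Complex.log (1 - Complex.I * (b τ : ℂ) * ξ)).re) volume a b' :=
          fun a b' => (Complex.continuous_re.comp (hc_tau ξ)).intervalIntegrable a b'
        have hkey : -(∫ τ in s..t', (Complex.log (1 - Complex.I * (b τ : ℂ) * ξ)).re)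
            = ∫ τ in t'..s, (Complex.log (1 - Complex.I * (b τ : ℂ) * ξ)).re := by
          rw [← intervalIntegral.integral_symm]
        rw [hkey]
        have hle : (∫ τ in t'..s, (Complex.log (1 - Complex.I * (b τ : ℂ) * ξ)).re)
            ≤ ∫ _τ in t'..s, Real.log (1 + B * ‖ξ‖) := by
          apply intervalIntegral.integral_mono_on h.le (hIre t' s) intervalIntegrable_const
          intro τ hτ
          apply re_log_le ξ
          apply hB
          exact ⟨by linarith [hτ.1, hball.1], by linarith [hτ.2]⟩
        rw [intervalIntegral.integral_const, smul_eq_mul] at hle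
        calc Real.exp (∫ τ in t'..s, (Complex.log (1 - Complex.I * (b τ : ℂ) * ξ)).re)
            ≤ Real.exp ((s - t') * Real.log (1 + B * ‖ξ‖)) := Real.exp_le_exp.mpr hle
          _ = (1 + B * ‖ξ‖) ^ (s - t') := by
              rw [Real.rpow_def_of_pos (by linarith), mul_comm]
          _ ≤ (1 + B * ‖ξ‖) ^ (1 : ℝ) := by
              apply Real.rpow_le_rpow_of_exponent_le (by linarith)
              linarith [hball.1]
          _ = 1 + B * ‖ξ‖ := Real.rpow_one _
    have hlog_bound : ∀ t' ∈ Metric.ball t 1, ∀ ξ : ℝ,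
        ‖Complex.log (1 - Complex.I * (b t' : ℂ) * ξ)‖ ≤ Real.pi + B * ‖ξ‖ := by
      intro t' ht' ξ
      rw [Metric.mem_ball, Real.dist_eq, abs_lt] at ht'
      exact norm_log_le ξ (hB t' ⟨by linarith [ht'.1, ht'.2], by linarith [ht'.2]⟩)
    have hbound_ge : ∀ t' ∈ Metric.ball t 1, ∀ ξ : ℝ, ‖F' t' ξ‖ ≤ bound ξ := by
      intro t' ht' ξ
      rw [hF']
      simp only
      rw [norm_mul, norm_mul, norm_mul, hnorm_exp_Ix, one_mul, norm_neg]
      rw [hbound]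
      apply mul_le_mul (hlog_bound t' ht' ξ)
        (mul_le_mul_of_nonneg_right (hexp_bound t' ht' ξ) (norm_nonneg _))
        (by positivity) (by positivity)
    have hbound_int : Integrable bound := by
      have h0 := integrable_pow_fhat f 0
      have h1 := integrable_pow_fhat f 1
      have h2 := integrable_pow_fhat f 2
      have heq : bound = fun ξ => Real.pi * (‖ξ‖ ^ 0 * ‖fhat (⇑f) ξ‖) +
          ((Real.pi * B + B) * (‖ξ‖ ^ 1 * ‖fhat (⇑f) ξ‖) +
            (B * B) * (‖ξ‖ ^ 2 * ‖fhat (⇑f) ξ‖)) := by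
        funext ξ
        rw [hbound]
        ring
      rw [heq]
      exact (h0.const_mul _).add ((h1.const_mul _).add (h2.const_mul _))
    have hFt_int : Integrable (F t) := by
      refine Integrable.mono' hbound_int (hFcont t).aestronglyMeasurable
        (Eventually.of_forall fun ξ => ?_)
      rw [hF]
      simp only
      rw [norm_mul, norm_mul, hnorm_exp_Ix, one_mul]
      have h1 : ‖Complex.exp (-(∫ τ in s..t, Complex.log (1 - Complex.I * (b τ : ℂ) * ξ)))‖ *
          ‖fhat (⇑f) ξ‖ ≤ (1 + B * ‖ξ‖) * ‖fhat (⇑f) ξ‖ :=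
        mul_le_mul_of_nonneg_right (hexp_bound t (Metric.mem_ball_self one_pos) ξ)
          (norm_nonneg _)
      have hpi : (1 : ℝ) ≤ Real.pi + B * ‖ξ‖ := by
        have := Real.pi_gt_three
        have : (0:ℝ) ≤ B * ‖ξ‖ := by positivity
        linarith [Real.pi_gt_three]
      calc ‖Complex.exp (-(∫ τ in s..t, Complex.log (1 - Complex.I * (b τ : ℂ) * ξ)))‖ *
            ‖fhat (⇑f) ξ‖ ≤ (1 + B * ‖ξ‖) * ‖fhat (⇑f) ξ‖ := h1
        _ ≤ bound ξ := by
            rw [hbound]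
            exact le_mul_of_one_le_left (by positivity) hpi
    have hdiff : ∀ ξ : ℝ, ∀ t' ∈ Metric.ball t 1,
        HasDerivAt (fun tt => F tt ξ) (F' t' ξ) t' := by
      intro ξ t' _
      have h1 : HasDerivAt
          (fun tt => ∫ τ in s..tt, Complex.log (1 - Complex.I * (b τ : ℂ) * ξ))
          (Complex.log (1 - Complex.I * (b t' : ℂ) * ξ)) t' :=
        ((hc_tau ξ).integral_hasStrictDerivAt s t').hasDerivAt
      have h2 := ((h1.neg.cexp).mul_const (fhat (⇑f) ξ)).const_mul
        (Complex.exp (Complex.I * ξ * x))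
      refine h2.congr_deriv ?_
      rw [hF']
      simp only [Pi.neg_apply]
      ring
    have hmeas : ∀ᶠ t' in nhds t, AEStronglyMeasurable (F t') volume :=
      Eventually.of_forall fun t' => (hFcont t').aestronglyMeasurable
    obtain ⟨-, hder⟩ := hasDerivAt_integral_of_dominated_loc_of_deriv_le (Metric.ball_mem_nhds t one_pos) hmeas hFt_int
      hF'cont.aestronglyMeasurable
      (Eventually.of_forall fun ξ t' ht' => hbound_ge t' ht' ξ) hbound_int
      (Eventually.of_forall fun ξ t' ht' => hdiff ξ t' ht')
    have hfun : (fun t' : ℝ => u x t') = fun t' : ℝ =>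
        (((Real.sqrt (2 * Real.pi))⁻¹ : ℝ) : ℂ) * ∫ ξ : ℝ, F t' ξ :=
      funext fun t' => hu x t'
    rw [hfun]
    exact hder.const_mul _
end

section
/- Let α ∈ (0,2), L ≥ 0, let μ be a Borel probability measure on ℝ with lim_{x→∞} x^α μ((x,∞)) = L, and let ν be a Borel probability measure on (0,∞) with ∫_0^∞ z ν(dz) < ∞. Then lim_{x→∞} x^α ∫_0^∞ μ( (x z^{-1/α}, ∞) ) ν(dz) = L ∫_0^∞ z ν(dz). -/
open MeasureTheory Real Filter

theorem stmt17 (α : ℝ) (hα : α ∈ Set.Ioo (0 : ℝ) 2) (L : ℝ) (hL : 0 ≤ L)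
    (μ : Measure ℝ) [IsProbabilityMeasure μ]
    (hμ : Tendsto (fun x : ℝ => x ^ α * (μ (Set.Ioi x)).toReal) atTop (nhds L))
    (ν : Measure ℝ) [IsProbabilityMeasure ν] (hν0 : ν (Set.Iic (0 : ℝ)) = 0)
    (hνmean : Integrable (fun z : ℝ => z) ν) :
    Tendsto (fun x : ℝ =>
        x ^ α * ∫ z : ℝ, (μ (Set.Ioi (x * z ^ (-(1 / α))))).toReal ∂ν)
      atTop (nhds (L * ∫ z : ℝ, z ∂ν)) := by
  obtain ⟨hα0, hα2⟩ := hα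
  set g : ℝ → ℝ := fun y => y ^ α * (μ (Set.Ioi y)).toReal with hg
  -- a.e. positivity of z
  have hzpos : ∀ᵐ z ∂ν, 0 < z := by
    rw [ae_iff]
    convert hν0 using 2
    ext z
    simp [not_lt]
  -- toReal of measure ≤ 1
  have hμ1 : ∀ s : Set ℝ, (μ s).toReal ≤ 1 := by
    intro s
    calc (μ s).toReal ≤ (1 : ENNReal).toReal :=
          ENNReal.toReal_mono ENNReal.one_ne_top prob_le_one
      _ = 1 := by simp
  -- uniform bound on g over nonneg reals
  obtain ⟨x0, hx0⟩ := eventually_atTop.mp (hμ.eventually (eventually_le_nhds (lt_add_one L)))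
  set x1 : ℝ := max x0 0 with hx1
  set M : ℝ := (L + 1) + x1 ^ α with hM
  have hx1nonneg : 0 ≤ x1 := le_max_right _ _
  have hgbound : ∀ y : ℝ, 0 ≤ y → g y ≤ M := by
    intro y hy
    rcases le_or_gt x1 y with h | h
    · have h1 : g y ≤ L + 1 := hx0 y (le_trans (le_max_left _ _) h)
      have h2 : 0 ≤ x1 ^ α := rpow_nonneg hx1nonneg _
      linarith
    · have h1 : y ^ α ≤ x1 ^ α := rpow_le_rpow hy h.le hα0.le
      have h2 : g y ≤ y ^ α * 1 := by
        apply mul_le_mul_of_nonneg_left (hμ1 _) (rpow_nonneg hy _)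
      have h3 : 0 ≤ L + 1 := by linarith
      simp only [mul_one] at h2
      linarith
  -- key algebraic identity
  have key : ∀ x : ℝ, 0 ≤ x → ∀ z : ℝ, 0 < z →
      x ^ α * (μ (Set.Ioi (x * z ^ (-(1 / α))))).toReal = z * g (x * z ^ (-(1 / α))) := by
    intro x hx z hz
    have h1 : (x * z ^ (-(1 / α))) ^ α = x ^ α * z⁻¹ := by
      rw [Real.mul_rpow hx (Real.rpow_nonneg hz.le _), ← Real.rpow_mul hz.le]
      have : -(1 / α) * α = -1 := by field_simp
      rw [this, Real.rpow_neg_one]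
    rw [hg]
    dsimp only
    rw [h1]
    field_simp
  -- measurability of the integrand
  have hanti : Antitone (fun t : ℝ => (μ (Set.Ioi t)).toReal) := by
    intro a b hab
    exact ENNReal.toReal_mono (measure_ne_top μ _) (measure_mono (Set.Ioi_subset_Ioi hab))
  have hmeas : ∀ x : ℝ, AEStronglyMeasurable
      (fun z : ℝ => x ^ α * (μ (Set.Ioi (x * z ^ (-(1 / α))))).toReal) ν := by
    intro x
    have h1 : Measurable fun z : ℝ => x * z ^ (-(1 / α)) := by fun_prop
    exact ((hanti.measurable.comp h1).const_mul (x ^ α)).aestronglyMeasurable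
  -- rewrite the target
  have heq : ∀ x : ℝ,
      x ^ α * ∫ z : ℝ, (μ (Set.Ioi (x * z ^ (-(1 / α))))).toReal ∂ν
        = ∫ z : ℝ, x ^ α * (μ (Set.Ioi (x * z ^ (-(1 / α))))).toReal ∂ν := by
    intro x
    rw [integral_const_mul]
  have hL2 : L * ∫ z : ℝ, z ∂ν = ∫ z : ℝ, L * z ∂ν := by
    rw [integral_const_mul]
  simp only [heq, hL2]
  -- dominated convergence
  apply tendsto_integral_filter_of_dominated_convergence (fun z : ℝ => M * z)
  · exact Eventually.of_forall hmeas
  · filter_upwards [eventually_ge_atTop (0 : ℝ)] with x hx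
    filter_upwards [hzpos] with z hz
    rw [key x hx z hz]
    have hgy : 0 ≤ g (x * z ^ (-(1 / α))) :=
      mul_nonneg (rpow_nonneg (mul_nonneg hx (rpow_nonneg hz.le _)) _) ENNReal.toReal_nonneg
    rw [Real.norm_eq_abs, abs_of_nonneg (mul_nonneg hz.le hgy)]
    calc z * g (x * z ^ (-(1 / α))) ≤ z * M := by
          apply mul_le_mul_of_nonneg_left _ hz.le
          exact hgbound _ (mul_nonneg hx (rpow_nonneg hz.le _))
      _ = M * z := mul_comm _ _
  · exact hνmean.const_mul M
  · filter_upwards [hzpos] with z hz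
    have hc : 0 < z ^ (-(1 / α)) := Real.rpow_pos_of_pos hz _
    have h1 : Tendsto (fun x : ℝ => x * z ^ (-(1 / α))) atTop atTop :=
      Tendsto.atTop_mul_const hc tendsto_id
    have h2 : Tendsto (fun x : ℝ => g (x * z ^ (-(1 / α)))) atTop (nhds L) := hμ.comp h1
    have h3 : Tendsto (fun x : ℝ => z * g (x * z ^ (-(1 / α)))) atTop (nhds (z * L)) :=
      h2.const_mul z
    rw [mul_comm z L] at h3
    apply h3.congr'
    filter_upwards [eventually_ge_atTop (0 : ℝ)] with x hx
    exact (key x hx z hz).symm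
end
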